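/- arXiv:1011.0071 — 3 statements merged into one kernel-verified Lean document; each statement's English description precedes it below -/
import Mathlib

section
/- Let X be a WLD Banach space. If Y ⊆ X is a nonseparable closed subspace and Z ⊆ X is a coseparable closed subspace, then dens(Y ∩ Z) = dens(Y). More generally, for any countable sequence (E_n)_{n<ω} of closed subspaces of X, dens(X) = max( dens(⋂_{n<ω} E_n), sup_{n<ω} dens(X/E_n) ). -/
open Cardinal Ordinal Set Pointwise

universe u

noncomputable def closedSpan {X : Type u} [SeminormedAddCommGroup X] [NormedSpace ℝ X]
    (s : Set X) : Submodule ℝ X :=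
  (Submodule.span ℝ s).topologicalClosure

/-- `X` is WLD: it admits an M-basis all of whose supports of functionals are countable. -/
def IsWLD (X : Type u) [SeminormedAddCommGroup X] [NormedSpace ℝ X] : Prop :=
  ∃ (ι : Type u) (x : ι → X) (f : ι → (X →L[ℝ] ℝ)),
    (∀ i, f i (x i) = 1) ∧ (∀ i j, i ≠ j → f i (x j) = 0) ∧
    closedSpan (Set.range x) = ⊤ ∧
    (∀ v : X, v ≠ 0 → ∃ i, f i v ≠ 0) ∧
    (∀ g : X →L[ℝ] ℝ, {i | g (x i) ≠ 0}.Countable)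

/-- density character: least cardinality of a dense subset (at least `ℵ₀`). -/
noncomputable def densChar (Y : Type u) [TopologicalSpace Y] : Cardinal.{u} :=
  max ℵ₀ (sInf {c : Cardinal.{u} | ∃ s : Set Y, Dense s ∧ #s = c})

open Metric

section Aux

lemma densChar_le_of_dense {Y : Type u} [TopologicalSpace Y] {s : Set Y} (hs : Dense s) :
    densChar Y ≤ max ℵ₀ #s :=
  max_le_max le_rfl (csInf_le' ⟨s, hs, rfl⟩)

lemma aleph0_le_densChar {Y : Type u} [TopologicalSpace Y] : ℵ₀ ≤ densChar Y := le_max_left _ _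

lemma exists_dense_densChar (Y : Type u) [TopologicalSpace Y] :
    ∃ s : Set Y, Dense s ∧ #s ≤ densChar Y := by
  have hne : {c : Cardinal.{u} | ∃ s : Set Y, Dense s ∧ #s = c}.Nonempty :=
    ⟨#(univ : Set Y), ⟨univ, dense_univ, rfl⟩⟩
  obtain ⟨s, hs, hc⟩ := csInf_mem hne
  exact ⟨s, hs, hc.le.trans (le_max_right _ _)⟩

-- metric transfer lemmas
lemma exists_subset_card_le_closure {α : Type u} [MetricSpace α] {T D : Set α}
    (h : T ⊆ closure D) :
    ∃ D' : Set α, D' ⊆ T ∧ #D' ≤ max ℵ₀ #D ∧ T ⊆ closure D' := by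
  rcases T.eq_empty_or_nonempty with rfl | hT
  · exact ⟨∅, by simp, by simp, by simp⟩
  have hch : ∀ (d : α) (n : ℕ), ∃ t, t ∈ T ∧ dist d t < infDist d T + 1/(n+1) := by
    intro d n
    have : infDist d T < infDist d T + 1/(n+1) :=
      lt_add_of_pos_right _ (by positivity)
    obtain ⟨t, ht, ht'⟩ := (infDist_lt_iff hT).1 this
    exact ⟨t, ht, ht'⟩
  choose F hFT hFd using hch
  refine ⟨range (fun p : ↥D × ℕ => F p.1.1 p.2), ?_, ?_, ?_⟩
  · rintro t ⟨⟨⟨d, hd⟩, n⟩, rfl⟩; exact hFT d n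
  · refine mk_range_le.trans ?_
    have : #(↥D × ℕ) = #D * ℵ₀ := by
      simp [Cardinal.mk_prod, Cardinal.lift_uzero, Cardinal.lift_aleph0]
    rw [this]
    refine (Cardinal.mul_le_max _ _).trans ?_
    simp [max_comm, le_max_iff, le_refl]
  · intro t ht
    rw [Metric.mem_closure_iff]
    intro ε hε
    obtain ⟨d, hd, hdist⟩ := Metric.mem_closure_iff.1 (h ht) (ε/3) (by linarith)
    obtain ⟨n, hn⟩ := exists_nat_one_div_lt (show (0:ℝ) < ε/3 by linarith)
    refine ⟨F d n, ⟨⟨⟨d, hd⟩, n⟩, rfl⟩, ?_⟩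
    have h1 : infDist d T ≤ dist d t := infDist_le_dist_of_mem ht
    have h2 := hFd d n
    have h3 : dist t (F d n) ≤ dist t d + dist d (F d n) := dist_triangle _ _ _
    have h4 : dist d t = dist t d := dist_comm d t
    linarith

lemma densChar_coe_le {α : Type u} [MetricSpace α] {T D : Set α} (h : T ⊆ closure D) :
    densChar ↥T ≤ max ℵ₀ #D := by
  obtain ⟨D', hD'T, hcard, hcl⟩ := exists_subset_card_le_closure h
  have hdense : Dense (Subtype.val ⁻¹' D' : Set ↥T) := by
    rw [Metric.dense_iff]
    intro t ε hε
    obtain ⟨d, hd, hdist⟩ := Metric.mem_closure_iff.1 (hcl t.2) ε hε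
    rw [dist_comm] at hdist
    exact ⟨⟨d, hD'T hd⟩, by simpa [Metric.mem_ball, Subtype.dist_eq, dist_comm] using ⟨hdist, hd⟩⟩
  refine (densChar_le_of_dense hdense).trans ?_
  have : #(Subtype.val ⁻¹' D' : Set ↥T) ≤ #D' :=
    Cardinal.mk_preimage_of_injective _ _ Subtype.coe_injective
  exact sup_le le_sup_left (this.trans hcard)

lemma exists_subset_closure_densChar {α : Type u} [MetricSpace α] (T : Set α) :
    ∃ D : Set α, D ⊆ T ∧ #D ≤ densChar ↥T ∧ T ⊆ closure D := by
  obtain ⟨s, hs, hcard⟩ := exists_dense_densChar ↥T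
  refine ⟨Subtype.val '' s, by rintro x ⟨⟨y, hy⟩, _, rfl⟩; exact hy, (mk_image_le).trans hcard, ?_⟩
  intro t ht
  have : (⟨t, ht⟩ : ↥T) ∈ closure s := hs _
  have := image_closure_subset_closure_image (continuous_subtype_val (p := (· ∈ T)))
    (Set.mem_image_of_mem _ this)
  exact this

variable {X : Type u} [NormedAddCommGroup X] [NormedSpace ℝ X]

lemma exists_functional_quotient (E : Submodule ℝ X) (v : X) :
    ∃ g : X →L[ℝ] ℝ, (∀ e ∈ E, g e = 0) ∧
      (∀ w : X, |g w| ≤ ‖(Submodule.Quotient.mk w : X ⧸ E)‖) ∧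
      g v = ‖(Submodule.Quotient.mk v : X ⧸ E)‖ := by
  set r := ‖(Submodule.Quotient.mk v : X ⧸ E)‖ with hr
  by_cases hr0 : r = 0
  · exact ⟨0, by simp, fun w => by
      simpa using norm_nonneg (Submodule.Quotient.mk w : X ⧸ E), by simp [hr0]⟩
  have hrpos : 0 < r := lt_of_le_of_ne (norm_nonneg _) (Ne.symm hr0)
  have hv : (Submodule.Quotient.mk v : X ⧸ E) ≠ 0 := by
    intro h0; rw [h0] at hr; simp at hr; exact hr0 hr
  set W := X ⧸ E
  set e := LinearEquiv.toSpanNonzeroSingleton ℝ W (Submodule.Quotient.mk v) hv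
  set f₀ : (ℝ ∙ (Submodule.Quotient.mk v : W)) →ₗ[ℝ] ℝ := (e.symm.toLinearMap)
  have hbound : ∀ z : (ℝ ∙ (Submodule.Quotient.mk v : W)), ‖f₀ z‖ ≤ (1/r) * ‖(z : W)‖ := by
    intro z
    have hz : (z : W) = (f₀ z) • (Submodule.Quotient.mk v : W) := by
      have := LinearEquiv.coord_apply_smul ℝ W (Submodule.Quotient.mk v) hv z
      exact this.symm
    have : ‖(z : W)‖ = ‖f₀ z‖ * r := by rw [hz, norm_smul]
    rw [this]; field_simp; exact le_rfl
  set f₀' : (ℝ ∙ (Submodule.Quotient.mk v : W)) →L[ℝ] ℝ := LinearMap.mkContinuous f₀ (1/r) hbound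
  obtain ⟨h, hext, hnorm⟩ := exists_extension_norm_eq _ f₀'
  have hnle : ‖h‖ ≤ 1/r := by
    rw [hnorm]; exact LinearMap.mkContinuous_norm_le _ (by positivity) _
  set πL : X →L[ℝ] W := LinearMap.mkContinuous (Submodule.mkQ E) 1
    (fun x => by rw [one_mul]; exact Submodule.Quotient.norm_mk_le E x)
  have hπ : ∀ w : X, πL w = Submodule.Quotient.mk w := fun w => rfl
  refine ⟨r • (h.comp πL), ?_, ?_, ?_⟩
  · intro x hx
    have : (Submodule.Quotient.mk x : W) = 0 := (Submodule.Quotient.mk_eq_zero E).2 hx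
    simp [hπ, this]
  · intro w
    have h1 : |h (πL w)| ≤ ‖h‖ * ‖(Submodule.Quotient.mk w : W)‖ := by
      rw [hπ]; exact h.le_opNorm _
    have h2 : ‖h‖ * ‖(Submodule.Quotient.mk w : W)‖ ≤ (1/r) * ‖(Submodule.Quotient.mk w : W)‖ :=
      mul_le_mul_of_nonneg_right hnle (norm_nonneg _)
    have : |r * h (πL w)| = r * |h (πL w)| := by
      rw [abs_mul, abs_of_pos hrpos]
    simp only [ContinuousLinearMap.smul_apply, ContinuousLinearMap.comp_apply, _root_.smul_eq_mul]
    rw [this]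
    calc r * |h (πL w)| ≤ r * ((1/r) * ‖(Submodule.Quotient.mk w : W)‖) :=
          mul_le_mul_of_nonneg_left (h1.trans h2) hrpos.le
      _ = ‖(Submodule.Quotient.mk w : W)‖ := by field_simp
  · have hmem : (Submodule.Quotient.mk v : W) ∈ (ℝ ∙ (Submodule.Quotient.mk v : W)) :=
      Submodule.mem_span_singleton_self _
    have : h (πL v) = f₀' ⟨_, hmem⟩ := by rw [hπ]; exact hext ⟨_, hmem⟩
    have hf1 : f₀' (⟨_, hmem⟩ : (ℝ ∙ (Submodule.Quotient.mk v : W))) = 1 := by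
      simpa [f₀', f₀] using LinearEquiv.coord_self ℝ W (Submodule.Quotient.mk v) hv
    simp only [ContinuousLinearMap.smul_apply, ContinuousLinearMap.comp_apply, _root_.smul_eq_mul]
    rw [this, hf1, mul_one]

lemma mem_closure_of_quotient_norm_zero {E : Submodule ℝ X} {v : X}
    (h : ‖(Submodule.Quotient.mk v : X ⧸ E)‖ = 0) : v ∈ closure (E : Set X) := by
  rw [Metric.mem_closure_iff]
  intro ε hε
  obtain ⟨m, hm, hml⟩ := Submodule.Quotient.norm_mk_lt (Submodule.Quotient.mk v : X ⧸ E) hε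
  have hmv : m - v ∈ E := (Submodule.Quotient.eq E).1 hm
  have : v - m ∈ E := by simpa [neg_sub] using E.neg_mem hmv
  refine ⟨v - m, this, ?_⟩
  rw [h, zero_add] at hml
  simpa [dist_eq_norm] using hml

lemma exists_separating (E : Submodule ℝ X) (hE : IsClosed (E : Set X)) :
    ∃ L : Set (X →L[ℝ] ℝ), #L ≤ densChar (X ⧸ E) ∧ (∀ g ∈ L, ∀ e ∈ E, g e = 0) ∧
      ∀ v : X, (∀ g ∈ L, g v = 0) → v ∈ E := by
  obtain ⟨s, hs, hcard⟩ := exists_dense_densChar (X ⧸ E)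
  choose gd hgd0 hgdb hgdv using fun d : X => exists_functional_quotient E d
  have hrep : ∀ q : X ⧸ E, ∃ d : X, Submodule.Quotient.mk d = q :=
    fun q => Submodule.Quotient.mk_surjective E q
  choose rep hrep' using hrep
  refine ⟨(fun q => gd (rep q)) '' s, mk_image_le.trans hcard,
    by rintro g ⟨q, _, rfl⟩ e he; exact hgd0 _ e he, ?_⟩
  intro v hv
  by_contra hvE
  set r := ‖(Submodule.Quotient.mk v : X ⧸ E)‖ with hr
  have hr0 : r ≠ 0 := by
    intro h0
    exact hvE (hE.closure_subset_iff.2 (le_refl _) (mem_closure_of_quotient_norm_zero h0))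
  have hrpos : 0 < r := lt_of_le_of_ne (norm_nonneg _) (Ne.symm hr0)
  obtain ⟨q, hq, hdq⟩ := Metric.mem_closure_iff.1 (hs (Submodule.Quotient.mk v)) (r/3)
    (by linarith)
  set d := rep q with hd
  have hmkd : (Submodule.Quotient.mk d : X ⧸ E) = q := hrep' q
  have hdist : ‖(Submodule.Quotient.mk (v - d) : X ⧸ E)‖ < r/3 := by
    have : (Submodule.Quotient.mk (v - d) : X ⧸ E) = Submodule.Quotient.mk v - q := by
      rw [← hmkd]; exact Submodule.Quotient.mk_sub E
    rw [this, ← dist_eq_norm]; exact hdq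
  have hnd : ‖(Submodule.Quotient.mk d : X ⧸ E)‖ > 2*r/3 := by
    have h1 : ‖(Submodule.Quotient.mk v : X ⧸ E)‖ ≤
        ‖(Submodule.Quotient.mk d : X ⧸ E)‖ + ‖(Submodule.Quotient.mk (v - d) : X ⧸ E)‖ := by
      have : (Submodule.Quotient.mk v : X ⧸ E) =
          Submodule.Quotient.mk d + Submodule.Quotient.mk (v - d) := by
        rw [Submodule.Quotient.mk_sub]; abel
      rw [this]; exact norm_add_le _ _
    linarith [hdist, hr ▸ h1]
  have hgv : gd d v = 0 := hv _ ⟨q, hq, rfl⟩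
  have hgvd : |gd d (v - d)| ≤ ‖(Submodule.Quotient.mk (v - d) : X ⧸ E)‖ := hgdb d (v - d)
  have : gd d v = gd d d + gd d (v - d) := by
    have : v = d + (v - d) := by abel
    conv_lhs => rw [this]
    simp
  rw [hgv, hgdv] at this
  have habs := abs_le.1 hgvd
  linarith [this, hnd, hdist, habs.1]

lemma isSeparable_span_finset (F : Finset X) :
    TopologicalSpace.IsSeparable ((Submodule.span ℝ (F : Set X) : Submodule ℝ X) : Set X) := by
  classical
  induction F using Finset.induction_on with
  | empty =>
      simp only [Finset.coe_empty, Submodule.span_empty, Submodule.bot_coe]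
      exact (Set.countable_singleton 0).isSeparable
  | @insert a F ha ih =>
      have hins : (Submodule.span ℝ (insert a (F : Set X)) : Set X) =
          ((ℝ ∙ a : Submodule ℝ X) : Set X) + ((Submodule.span ℝ (F : Set X)) : Set X) := by
        rw [Submodule.span_insert, Submodule.coe_sup]
      rw [Finset.coe_insert, hins]
      have h1 : TopologicalSpace.IsSeparable ((ℝ ∙ a : Submodule ℝ X) : Set X) := by
        have : ((ℝ ∙ a : Submodule ℝ X) : Set X) = (fun t : ℝ => t • a) '' univ := by
          ext y
          simp [Submodule.mem_span_singleton, eq_comm]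
        rw [this]
        exact (TopologicalSpace.IsSeparable.of_separableSpace (univ : Set ℝ)).image
          (by continuity)
      have hadd : ((ℝ ∙ a : Submodule ℝ X) : Set X) + ((Submodule.span ℝ (F : Set X)) : Set X) =
          (fun p : X × X => p.1 + p.2) '' (((ℝ ∙ a : Submodule ℝ X) : Set X) ×ˢ
            ((Submodule.span ℝ (F : Set X)) : Set X)) := by
        ext y
        simp only [Set.mem_add, Set.mem_image, Set.mem_prod, Prod.exists]
        constructor
        · rintro ⟨u, hu, v, hv, rfl⟩; exact ⟨u, v, ⟨hu, hv⟩, rfl⟩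
        · rintro ⟨u, v, ⟨hu, hv⟩, rfl⟩; exact ⟨u, hu, v, hv, rfl⟩
      rw [hadd]
      exact (h1.prod ih).image (by fun_prop)

lemma span_subset_closure_card (A : Set X) :
    ∃ D : Set X, #D ≤ max ℵ₀ #A ∧ ((Submodule.span ℝ A : Submodule ℝ X) : Set X) ⊆ closure D := by
  classical
  have hsep : ∀ F : {F : Finset X // ↑F ⊆ A}, ∃ c : Set X, c.Countable ∧
      ((Submodule.span ℝ ((F : Finset X) : Set X) : Submodule ℝ X) : Set X) ⊆ closure c :=
    fun F => isSeparable_span_finset (F : Finset X)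
  choose c hc hcsub using hsep
  refine ⟨⋃ F, c F, ?_, ?_⟩
  · refine (mk_iUnion_le _).trans ?_
    have h1 : #{F : Finset X // ↑F ⊆ A} ≤ max ℵ₀ #A := by
      have hinj : Function.Injective
          (fun F : {F : Finset X // ↑F ⊆ A} => (F : Finset X).subtype (· ∈ A)) := by
        intro F G h
        replace h : ((F : Finset X).subtype (· ∈ A)) = ((G : Finset X).subtype (· ∈ A)) := h
        have hF := Finset.subtype_map (s := (F : Finset X)) (p := (· ∈ A))
        have hG := Finset.subtype_map (s := (G : Finset X)) (p := (· ∈ A))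
        apply Subtype.ext
        have h2 : ((F : Finset X).subtype (· ∈ A)).map (Function.Embedding.subtype _) =
            ((G : Finset X).subtype (· ∈ A)).map (Function.Embedding.subtype _) := by rw [h]
        rwa [hF, hG, Finset.filter_true_of_mem (fun x hx => F.2 hx),
          Finset.filter_true_of_mem (fun x hx => G.2 hx)] at h2
      refine (Cardinal.mk_le_of_injective hinj).trans ?_
      rcases finite_or_infinite ↥A with hfin | hinf
      · haveI := hfin
        exact le_max_of_le_left Cardinal.mk_le_aleph0
      · rw [Cardinal.mk_finset_of_infinite]
        exact le_max_right _ _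
    have h2 : ⨆ F, #(c F) ≤ ℵ₀ := by
      rcases isEmpty_or_nonempty {F : Finset X // ↑F ⊆ A} with he | hne
      · simp [ciSup_of_empty]
      · exact ciSup_le fun F => (hc F).le_aleph0
    calc #{F : Finset X // ↑F ⊆ A} * ⨆ F, #(c F) ≤ (max ℵ₀ #A) * ℵ₀ :=
          mul_le_mul' h1 h2
      _ ≤ max ℵ₀ #A := by
          rcases le_or_gt #A ℵ₀ with hA | hA
          · have he : (max ℵ₀ #A) * ℵ₀ = ℵ₀ := by
              rw [max_eq_left hA, Cardinal.aleph0_mul_aleph0]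
            rw [he]
            exact le_max_left _ _
          · rw [max_eq_right hA.le]
            calc #A * ℵ₀ ≤ #A * #A := mul_le_mul' le_rfl hA.le
              _ = #A := Cardinal.mul_eq_self hA.le
  · intro y hy
    obtain ⟨F, hFA, hyF⟩ := Submodule.mem_span_finite_of_mem_span hy
    exact closure_mono (Set.subset_iUnion c ⟨F, hFA⟩) (hcsub ⟨F, hFA⟩ hyF)

lemma norm_mk_bot (a : X) : ‖(Submodule.Quotient.mk a : X ⧸ (⊥ : Submodule ℝ X))‖ = ‖a‖ := by
  refine le_antisymm (Submodule.Quotient.norm_mk_le _ a) ?_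
  refine le_of_forall_pos_le_add fun ε hε => ?_
  obtain ⟨m, hm, hml⟩ := Submodule.Quotient.norm_mk_lt
    (Submodule.Quotient.mk a : X ⧸ (⊥ : Submodule ℝ X)) hε
  have : m = a := by
    have := (Submodule.Quotient.eq (⊥ : Submodule ℝ X)).1 hm
    simpa [sub_eq_zero] using this
  rw [this] at hml
  exact hml.le

lemma exists_dd (A : Set X) :
    ∃ D : Set X, D ⊆ ((Submodule.span ℝ A).topologicalClosure : Set X) ∧
      Cardinal.mk D ≤ max ℵ₀ #A ∧
      ((Submodule.span ℝ A).topologicalClosure : Set X) ⊆ closure D := by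
  obtain ⟨D0, hD0c, hD0⟩ := span_subset_closure_card A
  have hT : ((Submodule.span ℝ A).topologicalClosure : Set X) ⊆ closure D0 := by
    rw [Submodule.topologicalClosure_coe]
    calc closure ((Submodule.span ℝ A : Submodule ℝ X) : Set X) ⊆ closure (closure D0) :=
          closure_mono hD0
      _ = closure D0 := closure_closure
  obtain ⟨D', h1, h2, h3⟩ := exists_subset_card_le_closure hT
  exact ⟨D', h1, h2.trans (max_le (le_max_left _ _) hD0c), h3⟩

lemma main_decomp [CompleteSpace X]
    (ι : Type u) (x : ι → X)
    (hx : (Submodule.span ℝ (Set.range x)).topologicalClosure = ⊤)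
    (hcnt : ∀ g : X →L[ℝ] ℝ, {i | g (x i) ≠ 0}.Countable)
    (Y : Submodule ℝ X) (hY : IsClosed (Y : Set X))
    (G : Set (X →L[ℝ] ℝ)) :
    ∃ D : Set X, #D ≤ max ℵ₀ #G ∧
      ∀ y ∈ Y, ∃ p, p ∈ Y ∧ p ∈ closure D ∧ ∀ g ∈ G, g (y - p) = 0 := by
  classical
  -- choice functions
  choose dd hddsub hddcard hdddense using fun A : Set X => exists_dd A
  choose b1 hb10 hb1b hb1v using fun v : X => exists_functional_quotient ⊥ v
  choose b2 hb20 hb2b hb2v using fun v : X => exists_functional_quotient Y v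
  -- the recursion
  let step : Set X × Set (X →L[ℝ] ℝ) → Set X × Set (X →L[ℝ] ℝ) := fun AB =>
    let A := AB.1 ∪ (x '' ⋃ b ∈ AB.2, {i | b (x i) ≠ 0})
    (A, AB.2 ∪ (b1 '' dd A) ∪ (b2 '' dd A))
  let AB : ℕ → Set X × Set (X →L[ℝ] ℝ) := fun n => step^[n] (∅, G)
  let An : ℕ → Set X := fun n => (AB n).1
  let Bn : ℕ → Set (X →L[ℝ] ℝ) := fun n => (AB n).2
  have hABsucc : ∀ n, AB (n+1) = step (AB n) := fun n => Function.iterate_succ_apply' step n _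
  have hAmono : ∀ n, An n ⊆ An (n+1) := by
    intro n; rw [show An (n+1) = (step (AB n)).1 from congrArg Prod.fst (hABsucc n)]
    exact Set.subset_union_left
  have hBmono : ∀ n, Bn n ⊆ Bn (n+1) := by
    intro n; rw [show Bn (n+1) = (step (AB n)).2 from congrArg Prod.snd (hABsucc n)]
    exact fun b hb => Set.mem_union_left _ (Set.mem_union_left _ hb)
  have hAmono' : ∀ m n, m ≤ n → An m ⊆ An n := by
    intro m n hmn
    induction n with
    | zero => rw [Nat.le_zero.1 hmn]
    | succ k ih =>
        rcases Nat.le_succ_iff.1 hmn with h | h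
        · exact (ih h).trans (hAmono k)
        · rw [h]
  have hBmono' : ∀ m n, m ≤ n → Bn m ⊆ Bn n := by
    intro m n hmn
    induction n with
    | zero => rw [Nat.le_zero.1 hmn]
    | succ k ih =>
        rcases Nat.le_succ_iff.1 hmn with h | h
        · exact (ih h).trans (hBmono k)
        · rw [h]
  -- support elements get added
  have hsupp : ∀ n, ∀ b ∈ Bn n, ∀ i, b (x i) ≠ 0 → x i ∈ An (n+1) := by
    intro n b hb i hi
    rw [show An (n+1) = (step (AB n)).1 from congrArg Prod.fst (hABsucc n)]
    exact Set.mem_union_right _ ⟨i, Set.mem_biUnion hb hi, rfl⟩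
  have hb1mem : ∀ n, ∀ a ∈ dd (An (n+1)), b1 a ∈ Bn (n+1) := by
    intro n a ha
    rw [show Bn (n+1) = (step (AB n)).2 from congrArg Prod.snd (hABsucc n)]
    rw [show An (n+1) = (step (AB n)).1 from congrArg Prod.fst (hABsucc n)] at ha
    exact Set.mem_union_left _ (Set.mem_union_right _ ⟨a, ha, rfl⟩)
  have hb2mem : ∀ n, ∀ a ∈ dd (An (n+1)), b2 a ∈ Bn (n+1) := by
    intro n a ha
    rw [show Bn (n+1) = (step (AB n)).2 from congrArg Prod.snd (hABsucc n)]
    rw [show An (n+1) = (step (AB n)).1 from congrArg Prod.fst (hABsucc n)] at ha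
    exact Set.mem_union_right _ ⟨a, ha, rfl⟩
  -- the limit objects
  set Aω : Set X := ⋃ n, An n with hAωdef
  set Dω : Set X := ⋃ n, dd (An (n+1)) with hDωdef
  set Bω : Set (X →L[ℝ] ℝ) := ⋃ n, Bn n with hBωdef
  set Sm : Submodule ℝ X := (Submodule.span ℝ Aω).topologicalClosure with hSmdef
  have hSmclosed : IsClosed (Sm : Set X) := Submodule.isClosed_topologicalClosure _
  set N : Submodule ℝ X := ⨅ (b : ↥Bω), LinearMap.ker ((b : X →L[ℝ] ℝ) : X →ₗ[ℝ] ℝ) with hNdef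
  have hNmem : ∀ v : X, v ∈ N ↔ ∀ b ∈ Bω, b v = 0 := by
    intro v
    rw [hNdef, Submodule.mem_iInf]
    constructor
    · intro h b hb; exact h ⟨b, hb⟩
    · intro h b; exact h b b.2
  have hNclosed : IsClosed (N : Set X) := by
    rw [hNdef, Submodule.coe_iInf]
    exact isClosed_iInter fun b => ContinuousLinearMap.isClosed_ker _
  have hb1Bω : ∀ a ∈ Dω, b1 a ∈ Bω := by
    rintro a ha
    obtain ⟨n, hn⟩ := Set.mem_iUnion.1 ha
    exact Set.mem_iUnion.2 ⟨n+1, hb1mem n a hn⟩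
  have hb2Bω : ∀ a ∈ Dω, b2 a ∈ Bω := by
    rintro a ha
    obtain ⟨n, hn⟩ := Set.mem_iUnion.1 ha
    exact Set.mem_iUnion.2 ⟨n+1, hb2mem n a hn⟩
  have hDsub : Dω ⊆ (Sm : Set X) := by
    rintro a ha
    obtain ⟨n, hn⟩ := Set.mem_iUnion.1 ha
    have h1 : a ∈ ((Submodule.span ℝ (An (n+1))).topologicalClosure : Set X) := hddsub _ hn
    have h2 : (Submodule.span ℝ (An (n+1))).topologicalClosure ≤ Sm :=
      Submodule.topologicalClosure_mono (Submodule.span_mono (Set.subset_iUnion An (n+1)))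
    exact h2 h1
  have hSdense : (Sm : Set X) ⊆ closure Dω := by
    have hspan : ((Submodule.span ℝ Aω : Submodule ℝ X) : Set X) ⊆ closure Dω := by
      rw [hAωdef, Submodule.span_iUnion]
      have hdir : Directed (· ≤ ·) (fun n => Submodule.span ℝ (An n)) := by
        intro m n
        exact ⟨max m n, Submodule.span_mono (hAmono' m _ (le_max_left _ _)),
          Submodule.span_mono (hAmono' n _ (le_max_right _ _))⟩
      rw [Submodule.coe_iSup_of_directed _ hdir]
      rintro v ⟨sv, ⟨n, rfl⟩, hv⟩
      have h1 : v ∈ ((Submodule.span ℝ (An (n+1))).topologicalClosure : Set X) :=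
        (Submodule.le_topologicalClosure _) (Submodule.span_mono (hAmono n) hv)
      exact closure_mono (Set.subset_iUnion (fun k => dd (An (k+1))) n) (hdddense _ h1)
    rw [hSmdef, Submodule.topologicalClosure_coe]
    calc closure ((Submodule.span ℝ Aω : Submodule ℝ X) : Set X) ⊆ closure (closure Dω) :=
          closure_mono hspan
      _ = closure Dω := closure_closure
  -- norming property
  have key1 : ∀ s ∈ Sm, ∀ w ∈ N, ‖s‖ ≤ ‖s + w‖ := by
    have hDcase : ∀ a ∈ Dω, ∀ w ∈ N, ‖a‖ ≤ ‖a + w‖ := by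
      intro a ha w hw
      have hb := hb1Bω a ha
      have hbw : b1 a w = 0 := (hNmem w).1 hw _ hb
      have h1 : b1 a (a + w) = ‖a‖ := by
        rw [map_add, hbw, add_zero, hb1v a, norm_mk_bot]
      have h2 : |b1 a (a + w)| ≤ ‖a + w‖ := (hb1b a (a+w)).trans (by rw [norm_mk_bot])
      rw [h1] at h2
      exact (le_abs_self _).trans h2
    intro s hs w hw
    refine le_of_forall_pos_le_add fun ε hε => ?_
    obtain ⟨a, ha, hdista⟩ := Metric.mem_closure_iff.1 (hSdense hs) (ε/2) (by linarith)
    rw [dist_eq_norm] at hdista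
    have h1 : ‖s‖ ≤ ‖a‖ + ε/2 := by
      calc ‖s‖ = ‖a + (s - a)‖ := by congr 1; abel
        _ ≤ ‖a‖ + ‖s - a‖ := norm_add_le _ _
        _ ≤ ‖a‖ + ε/2 := by linarith
    have h2 : ‖a + w‖ ≤ ‖s + w‖ + ε/2 := by
      calc ‖a + w‖ = ‖(s + w) + (a - s)‖ := by congr 1; abel
        _ ≤ ‖s + w‖ + ‖a - s‖ := norm_add_le _ _
        _ ≤ ‖s + w‖ + ε/2 := by
            rw [← norm_neg (a - s), neg_sub]; linarith
    linarith [hDcase a ha w hw]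
  -- density of Sm ⊔ N
  have key2 : closure ((Sm ⊔ N : Submodule ℝ X) : Set X) = Set.univ := by
    have hrange : Set.range x ⊆ ((Sm ⊔ N : Submodule ℝ X) : Set X) := by
      rintro _ ⟨i, rfl⟩
      by_cases hxi : ∃ n, ∃ b ∈ Bn n, b (x i) ≠ 0
      · obtain ⟨n, b, hb, hbi⟩ := hxi
        have : x i ∈ Aω := Set.mem_iUnion.2 ⟨n+1, hsupp n b hb i hbi⟩
        have : x i ∈ Sm := (Submodule.le_topologicalClosure _) (Submodule.subset_span this)
        exact SetLike.mem_coe.2 (Submodule.mem_sup_left this)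
      · push_neg at hxi
        have : x i ∈ N := (hNmem _).2 (by
          rintro b hb
          obtain ⟨n, hn⟩ := Set.mem_iUnion.1 hb
          exact hxi n b hn)
        exact SetLike.mem_coe.2 (Submodule.mem_sup_right this)
    have h1 : (Submodule.span ℝ (Set.range x)) ≤ Sm ⊔ N := Submodule.span_le.2 hrange
    have h2 : (Sm ⊔ N : Submodule ℝ X).topologicalClosure = ⊤ :=
      top_unique (hx ▸ Submodule.topologicalClosure_mono h1)
    rw [← Submodule.topologicalClosure_coe, h2, Submodule.top_coe]
  have approx : ∀ u : X, ∀ n : ℕ, ∃ s ∈ Sm, ∃ w ∈ N, ‖u - (s + w)‖ < (1/2)^(n+1) := by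
    intro u n
    have hu : u ∈ closure ((Sm ⊔ N : Submodule ℝ X) : Set X) := key2 ▸ Set.mem_univ u
    obtain ⟨z, hz, hdz⟩ := Metric.mem_closure_iff.1 hu ((1/2)^(n+1)) (by positivity)
    obtain ⟨s, hs, w, hw, rfl⟩ := Submodule.mem_sup.1 (SetLike.mem_coe.1 hz)
    rw [dist_eq_norm] at hdz
    exact ⟨s, hs, w, hw, hdz⟩
  choose σf hσf ωf hωf happ using approx
  -- decomposition existence together with p ∈ closure Dω and p ∈ Y
  have key3 : ∀ v : X, ∃ p, p ∈ Sm ∧ v - p ∈ N := by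
    intro v
    set r : ℕ → X := fun k => Nat.rec v (fun k rk => rk - (σf rk k + ωf rk k)) k with hrdef
    have hr0 : r 0 = v := rfl
    have hrsucc : ∀ k, r (k+1) = r k - (σf (r k) k + ωf (r k) k) := fun k => rfl
    have hrb : ∀ k, ‖r (k+1)‖ < (1/2)^(k+1) := by
      intro k; rw [hrsucc k]; exact happ (r k) k
    set P : ℕ → X := fun k => ∑ j ∈ Finset.range k, σf (r j) j with hPdef
    set W : ℕ → X := fun k => ∑ j ∈ Finset.range k, ωf (r j) j with hWdef
    have hPW : ∀ k, P k + W k + r k = v := by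
      intro k
      induction k with
      | zero => simp [hPdef, hWdef, hr0]
      | succ m ih =>
          rw [hPdef, hWdef] at ih ⊢
          simp only [Finset.sum_range_succ]
          rw [hrsucc m]
          rw [← ih]
          abel
    have hPmem : ∀ k, P k ∈ Sm := fun k => Submodule.sum_mem _ fun j _ => hσf (r j) j
    have hWmem : ∀ k, W k ∈ N := fun k => Submodule.sum_mem _ fun j _ => hωf (r j) j
    have hcauchy : CauchySeq P := by
      refine cauchySeq_of_le_geometric (1/2) (‖v‖ + 2) (by norm_num) (fun k => ?_)
      have h1 : dist (P k) (P (k+1)) = ‖σf (r k) k‖ := by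
        rw [dist_eq_norm, hPdef]
        simp only [Finset.sum_range_succ]
        rw [show (∑ j ∈ Finset.range k, σf (r j) j) -
          ((∑ j ∈ Finset.range k, σf (r j) j) + σf (r k) k) = -(σf (r k) k) by abel]
        rw [norm_neg]
      rw [h1]
      have h2 : ‖σf (r k) k‖ ≤ ‖σf (r k) k + ωf (r k) k‖ :=
        key1 _ (hσf _ _) _ (hωf _ _)
      have h3 : σf (r k) k + ωf (r k) k = r k - r (k+1) := by rw [hrsucc k]; abel
      have h4 : ‖σf (r k) k‖ ≤ ‖r k‖ + ‖r (k+1)‖ := by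
        rw [h3] at h2
        exact h2.trans (norm_sub_le _ _)
      rcases k with _ | j
      · have : ‖r 0‖ = ‖v‖ := by rw [hr0]
        have hb1' := (hrb 0).le
        calc ‖σf (r 0) 0‖ ≤ ‖r 0‖ + ‖r 1‖ := h4
          _ ≤ ‖v‖ + (1/2)^1 := by rw [this]; linarith
          _ ≤ (‖v‖ + 2) * (1/2)^0 := by norm_num
      · have hbj := (hrb j).le
        have hbj1 := (hrb (j+1)).le
        have hp : ((1:ℝ)/2)^(j+2) ≤ (1/2)^(j+1) := by
          apply pow_le_pow_of_le_one <;> norm_num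
        have hC : (2:ℝ) ≤ ‖v‖ + 2 := by linarith [norm_nonneg v]
        calc ‖σf (r (j+1)) (j+1)‖ ≤ ‖r (j+1)‖ + ‖r (j+2)‖ := h4
          _ ≤ (1/2)^(j+1) + (1/2)^(j+1) := by linarith
          _ = 2 * (1/2)^(j+1) := by ring
          _ ≤ (‖v‖ + 2) * (1/2)^(j+1) := by
              apply mul_le_mul_of_nonneg_right hC (by positivity)
    obtain ⟨p, hp⟩ := cauchySeq_tendsto_of_complete hcauchy
    have hpS : p ∈ Sm := hSmclosed.mem_of_tendsto hp (Filter.Eventually.of_forall hPmem)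
    have hr0' : Filter.Tendsto r Filter.atTop (nhds 0) := by
      have hbound : ∀ᶠ (k : ℕ) in Filter.atTop, ‖r k‖ ≤ (1/2:ℝ)^k := by
        filter_upwards [Filter.eventually_ge_atTop 1] with k hk
        rcases Nat.exists_eq_add_of_le hk with ⟨j, rfl⟩
        have hj := (hrb j).le
        calc ‖r (1 + j)‖ = ‖r (j + 1)‖ := by rw [Nat.add_comm]
          _ ≤ (1/2)^(j+1) := hj
          _ = (1/2)^(1+j) := by rw [Nat.add_comm]
      exact squeeze_zero_norm' hbound
        (tendsto_pow_atTop_nhds_zero_of_lt_one (by norm_num) (by norm_num))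
    have hWlim : Filter.Tendsto W Filter.atTop (nhds (v - p)) := by
      have : ∀ k, W k = v - P k - r k := by
        intro k; have := hPW k; rw [← this]; abel
      rw [funext this]
      have h1 : Filter.Tendsto (fun k => v - P k) Filter.atTop (nhds (v - p)) :=
        Filter.Tendsto.const_sub v hp
      have := h1.sub hr0'
      simpa using this
    have hvpN : v - p ∈ N := hNclosed.mem_of_tendsto hWlim (Filter.Eventually.of_forall hWmem)
    exact ⟨p, hpS, hvpN⟩
  -- p lands in Y when v ∈ Y
  have key4 : ∀ y ∈ Y, ∀ p, p ∈ Sm → y - p ∈ N → p ∈ Y := by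
    intro y hy p hpS hpN
    have hq : ‖(Submodule.Quotient.mk p : X ⧸ Y)‖ = 0 := by
      refine le_antisymm ?_ (norm_nonneg _)
      refine le_of_forall_pos_le_add fun ε hε => ?_
      obtain ⟨a, ha, hdista⟩ := Metric.mem_closure_iff.1 (hSdense hpS) (ε/2) (by linarith)
      rw [dist_eq_norm] at hdista
      have hbB : b2 a ∈ Bω := hb2Bω a ha
      have hb2yp : b2 a (y - p) = 0 := (hNmem _).1 hpN _ hbB
      have hb2y : b2 a y = 0 := hb20 a y hy
      have hb2p : b2 a p = 0 := by
        have : b2 a p = b2 a y - b2 a (y - p) := by rw [map_sub]; ring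
        rw [this, hb2y, hb2yp]; ring
      have h1 : ‖(Submodule.Quotient.mk p : X ⧸ Y)‖ ≤
          ‖(Submodule.Quotient.mk a : X ⧸ Y)‖ + ‖(Submodule.Quotient.mk (p - a) : X ⧸ Y)‖ := by
        have : (Submodule.Quotient.mk p : X ⧸ Y) =
            Submodule.Quotient.mk a + Submodule.Quotient.mk (p - a) := by
          rw [← Submodule.Quotient.mk_add]; congr 1; abel
        rw [this]; exact norm_add_le _ _
      have h2 : ‖(Submodule.Quotient.mk a : X ⧸ Y)‖ ≤ ε/2 := by
        have e1 : b2 a a = b2 a (a - p) := by rw [map_sub, hb2p, _root_.sub_zero]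
        have e2 : |b2 a (a - p)| ≤ ‖(Submodule.Quotient.mk (a - p) : X ⧸ Y)‖ := hb2b a (a - p)
        have e3 : ‖(Submodule.Quotient.mk (a - p) : X ⧸ Y)‖ ≤ ‖a - p‖ :=
          Submodule.Quotient.norm_mk_le _ _
        have e4 : ‖a - p‖ ≤ ε/2 := by
          rw [← norm_neg (a - p), neg_sub]; linarith
        rw [← hb2v a, e1]
        exact (le_abs_self _).trans (e2.trans (e3.trans e4))
      have h3 : ‖(Submodule.Quotient.mk (p - a) : X ⧸ Y)‖ ≤ ε/2 :=
        (Submodule.Quotient.norm_mk_le _ _).trans (by linarith)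
      linarith
    have := mem_closure_of_quotient_norm_zero hq
    rwa [hY.closure_eq] at this
  -- cardinality bounds
  have hcardAB : ∀ n, #(An n) ≤ max ℵ₀ #G ∧ #(Bn n) ≤ max ℵ₀ #G := by
    have haleph : ℵ₀ ≤ max ℵ₀ #G := le_max_left _ _
    intro n
    induction n with
    | zero =>
        constructor
        · have : An 0 = (∅ : Set X) := rfl
          rw [this]; simp
        · exact le_max_right _ _
    | succ m ih =>
        have hA' : An (m+1) = An m ∪ (x '' ⋃ b ∈ Bn m, {i | b (x i) ≠ 0}) :=
          congrArg Prod.fst (hABsucc m)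
        have hU : #(⋃ b ∈ Bn m, {i | b (x i) ≠ 0}) ≤ max ℵ₀ #G := by
          refine (Cardinal.mk_biUnion_le _ _).trans ?_
          have hsup : ⨆ b : ↥(Bn m), #{i | (b : X →L[ℝ] ℝ) (x i) ≠ 0} ≤ ℵ₀ := by
            rcases isEmpty_or_nonempty ↥(Bn m) with he | hne
            · simp [ciSup_of_empty]
            · exact ciSup_le fun b => (hcnt (b : X →L[ℝ] ℝ)).le_aleph0
          calc #(Bn m) * ⨆ b : ↥(Bn m), #{i | (b : X →L[ℝ] ℝ) (x i) ≠ 0} ≤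
                (max ℵ₀ #G) * ℵ₀ := mul_le_mul' ih.2 hsup
            _ ≤ (max ℵ₀ #G) * (max ℵ₀ #G) := mul_le_mul' le_rfl haleph
            _ = max ℵ₀ #G := Cardinal.mul_eq_self haleph
        have hAcard : #(An (m+1)) ≤ max ℵ₀ #G := by
          rw [hA']
          refine (Cardinal.mk_union_le _ _).trans ?_
          have h2 : #(x '' ⋃ b ∈ Bn m, {i | b (x i) ≠ 0}) ≤ max ℵ₀ #G :=
            Cardinal.mk_image_le.trans hU
          calc #(An m) + #(x '' ⋃ b ∈ Bn m, {i | b (x i) ≠ 0}) ≤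
                (max ℵ₀ #G) + (max ℵ₀ #G) := add_le_add ih.1 h2
            _ = max ℵ₀ #G := Cardinal.add_eq_self haleph
        refine ⟨hAcard, ?_⟩
        have hB' : Bn (m+1) = Bn m ∪ (b1 '' dd (An (m+1))) ∪ (b2 '' dd (An (m+1))) := by
          have h1 : Bn (m+1) = (step (AB m)).2 := congrArg Prod.snd (hABsucc m)
          have h2 : An (m+1) = (step (AB m)).1 := congrArg Prod.fst (hABsucc m)
          rw [h1, h2]
        have hdd' : #(dd (An (m+1))) ≤ max ℵ₀ #G := by
          refine (hddcard _).trans ?_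
          exact max_le haleph hAcard
        rw [hB']
        refine (Cardinal.mk_union_le _ _).trans ?_
        have hb1c : #(b1 '' dd (An (m+1))) ≤ max ℵ₀ #G := Cardinal.mk_image_le.trans hdd'
        have hb2c : #(b2 '' dd (An (m+1))) ≤ max ℵ₀ #G := Cardinal.mk_image_le.trans hdd'
        have hfirst : #(Bn m ∪ (b1 '' dd (An (m+1))) : Set _) ≤ max ℵ₀ #G := by
          refine (Cardinal.mk_union_le _ _).trans ?_
          calc #(Bn m) + #(b1 '' dd (An (m+1))) ≤ (max ℵ₀ #G) + (max ℵ₀ #G) :=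
                add_le_add ih.2 hb1c
            _ = max ℵ₀ #G := Cardinal.add_eq_self haleph
        calc #(Bn m ∪ (b1 '' dd (An (m+1))) : Set _) + #(b2 '' dd (An (m+1))) ≤
              (max ℵ₀ #G) + (max ℵ₀ #G) := add_le_add hfirst hb2c
          _ = max ℵ₀ #G := Cardinal.add_eq_self haleph
  have hDωcard : #Dω ≤ max ℵ₀ #G := by
    have heq : Dω = ⋃ (n : ULift.{u} ℕ), dd (An (n.down + 1)) := by
      ext a
      simp only [hDωdef, Set.mem_iUnion]
      constructor
      · rintro ⟨n, hn⟩; exact ⟨ULift.up n, hn⟩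
      · rintro ⟨n, hn⟩; exact ⟨n.down, hn⟩
    rw [heq]
    refine (Cardinal.mk_iUnion_le _).trans ?_
    have h1 : #(ULift.{u} ℕ) = ℵ₀ := by
      rw [Cardinal.mk_uLift, Cardinal.mk_nat, Cardinal.lift_aleph0]
    have h2 : ⨆ (n : ULift.{u} ℕ), #(dd (An (n.down + 1))) ≤ max ℵ₀ #G :=
      ciSup_le fun n => (hddcard _).trans (max_le (le_max_left _ _) (hcardAB (n.down+1)).1)
    calc #(ULift.{u} ℕ) * ⨆ (n : ULift.{u} ℕ), #(dd (An (n.down + 1))) ≤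
          ℵ₀ * (max ℵ₀ #G) := by
            rw [h1]; exact mul_le_mul' le_rfl h2
      _ ≤ (max ℵ₀ #G) * (max ℵ₀ #G) := mul_le_mul' (le_max_left _ _) le_rfl
      _ = max ℵ₀ #G := Cardinal.mul_eq_self (le_max_left _ _)
  -- conclusion
  refine ⟨Dω, hDωcard, fun y hy => ?_⟩
  obtain ⟨p, hpS, hpN⟩ := key3 y
  refine ⟨p, key4 y hy p hpS hpN, hSdense hpS, fun g hg => ?_⟩
  have hgB : g ∈ Bω := Set.mem_iUnion.2 ⟨0, hg⟩
  exact (hNmem _).1 hpN g hgB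

lemma subset_closure_add {T D1 D2 : Set X}
    (hdec : ∀ t ∈ T, ∃ p w, t = p + w ∧ p ∈ closure D1 ∧ w ∈ closure D2) :
    T ⊆ closure (Set.image2 (· + ·) D1 D2) := by
  intro t ht
  obtain ⟨p, w, rfl, hp, hw⟩ := hdec t ht
  rw [Metric.mem_closure_iff]
  intro ε hε
  obtain ⟨d1, hd1, h1⟩ := Metric.mem_closure_iff.1 hp (ε/2) (by linarith)
  obtain ⟨d2, hd2, h2⟩ := Metric.mem_closure_iff.1 hw (ε/2) (by linarith)
  refine ⟨d1 + d2, Set.mem_image2_of_mem hd1 hd2, ?_⟩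
  rw [dist_eq_norm] at h1 h2 ⊢
  calc ‖p + w - (d1 + d2)‖ = ‖(p - d1) + (w - d2)‖ := by congr 1; abel
    _ ≤ ‖p - d1‖ + ‖w - d2‖ := norm_add_le _ _
    _ < ε := by linarith

lemma densChar_quotient_le (E : Submodule ℝ X) : densChar (X ⧸ E) ≤ densChar X := by
  obtain ⟨s, hs, hcard⟩ := exists_dense_densChar X
  have hcont : Continuous (fun v : X => (Submodule.Quotient.mk v : X ⧸ E)) := by
    refine LipschitzWith.continuous (K := 1) (LipschitzWith.of_dist_le_mul fun a b => ?_)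
    rw [NNReal.coe_one, one_mul, dist_eq_norm, dist_eq_norm, ← Submodule.Quotient.mk_sub]
    exact Submodule.Quotient.norm_mk_le _ _
  have hdense : Dense ((fun v : X => (Submodule.Quotient.mk v : X ⧸ E)) '' s) := by
    intro q
    obtain ⟨v, rfl⟩ := Submodule.Quotient.mk_surjective E q
    exact image_closure_subset_closure_image hcont
      (Set.mem_image_of_mem _ (hs v))
  refine (densChar_le_of_dense hdense).trans (max_le aleph0_le_densChar ?_)
  exact (Cardinal.mk_image_le).trans (hcard.trans le_rfl)

theorem stmt16' [CompleteSpace X]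
    (ι : Type u) (x : ι → X)
    (hx : (Submodule.span ℝ (Set.range x)).topologicalClosure = ⊤)
    (hcnt : ∀ g : X →L[ℝ] ℝ, {i | g (x i) ≠ 0}.Countable) :
    (∀ Y Z : Submodule ℝ X, IsClosed (Y : Set X) → IsClosed (Z : Set X) →
      ¬ TopologicalSpace.IsSeparable (Y : Set X) →
      TopologicalSpace.SeparableSpace (X ⧸ Z) →
      densChar ↥(Y ⊓ Z) = densChar ↥Y) ∧
    (∀ E : ℕ → Submodule ℝ X, (∀ n, IsClosed ((E n : Set X))) →
      densChar X = max (densChar ↥(⨅ n, E n)) (⨆ n, densChar (X ⧸ E n))) := by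
  constructor
  · intro Y Z hYc hZc _ hZsep
    obtain ⟨L, hLcard, hL0, hLsep⟩ := exists_separating Z hZc
    have hLle : #L ≤ ℵ₀ := by
      obtain ⟨u, hucnt, hudense⟩ := TopologicalSpace.exists_countable_dense (X ⧸ Z)
      have h1 := densChar_le_of_dense hudense
      exact hLcard.trans (h1.trans (max_le le_rfl hucnt.le_aleph0))
    obtain ⟨D, hDcard, hdec⟩ := main_decomp ι x hx hcnt Y hYc L
    have hDle : #D ≤ ℵ₀ := hDcard.trans (max_le le_rfl hLle)
    obtain ⟨D2, hD2sub, hD2card, hD2cl⟩ :=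
      exists_subset_closure_densChar ((Y ⊓ Z : Submodule ℝ X) : Set X)
    have hYdec : ∀ t ∈ (Y : Set X), ∃ p w, t = p + w ∧ p ∈ closure D ∧ w ∈ closure D2 := by
      intro t ht
      obtain ⟨p, hpY, hpD, hpN⟩ := hdec t ht
      refine ⟨p, t - p, by abel, hpD, hD2cl ?_⟩
      have htpZ : t - p ∈ Z := hLsep _ fun g hg => hpN g hg
      exact Submodule.mem_inf.2 ⟨Y.sub_mem ht hpY, htpZ⟩
    have hupper : densChar ↥(Y : Set X) ≤ max ℵ₀ #(Set.image2 (· + ·) D D2) :=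
      densChar_coe_le (subset_closure_add hYdec)
    have himg : #(Set.image2 (· + ·) D D2) ≤ densChar ↥(Y ⊓ Z) := by
      refine (Cardinal.mk_image2_le).trans ?_
      calc #D * #D2 ≤ ℵ₀ * densChar ↥(Y ⊓ Z) := mul_le_mul' hDle hD2card
        _ ≤ densChar ↥(Y ⊓ Z) * densChar ↥(Y ⊓ Z) :=
            mul_le_mul' aleph0_le_densChar le_rfl
        _ = densChar ↥(Y ⊓ Z) := Cardinal.mul_eq_self aleph0_le_densChar
    have hle : densChar ↥Y ≤ densChar ↥(Y ⊓ Z) :=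
      hupper.trans (max_le aleph0_le_densChar himg)
    obtain ⟨DY, hDYsub, hDYcard, hDYcl⟩ := exists_subset_closure_densChar ((Y : Set X))
    have hsub : ((Y ⊓ Z : Submodule ℝ X) : Set X) ⊆ closure DY := fun v hv =>
      hDYcl (show v ∈ (Y : Set X) from Submodule.mem_inf.1 hv |>.1)
    have hge : densChar ↥(Y ⊓ Z) ≤ densChar ↥Y :=
      (densChar_coe_le hsub).trans (max_le aleph0_le_densChar hDYcard)
    exact le_antisymm hge hle
  · intro E hEc
    have hκle : ∀ n, densChar (X ⧸ E n) ≤ densChar X := fun n => densChar_quotient_le (E n)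
    have hbdd : BddAbove (Set.range fun n => densChar (X ⧸ E n)) :=
      ⟨densChar X, by rintro c ⟨n, rfl⟩; exact hκle n⟩
    have hsupκ : ℵ₀ ≤ ⨆ n, densChar (X ⧸ E n) :=
      le_trans aleph0_le_densChar (le_ciSup hbdd 0)
    choose L hLcard hL0 hLsep using fun n => exists_separating (E n) (hEc n)
    have hGcard : #(⋃ n, L n) ≤ ⨆ n, densChar (X ⧸ E n) := by
      have heq : (⋃ n, L n) = ⋃ (n : ULift.{u} ℕ), L n.down := by
        ext g
        simp only [Set.mem_iUnion]
        exact ⟨fun ⟨n, h⟩ => ⟨ULift.up n, h⟩, fun ⟨n, h⟩ => ⟨n.down, h⟩⟩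
      rw [heq]
      refine (Cardinal.mk_iUnion_le _).trans ?_
      have h1 : #(ULift.{u} ℕ) = ℵ₀ := by
        rw [Cardinal.mk_uLift, Cardinal.mk_nat, Cardinal.lift_aleph0]
      have h2 : ⨆ (n : ULift.{u} ℕ), #(L n.down) ≤ ⨆ n, densChar (X ⧸ E n) :=
        ciSup_le fun n => (hLcard n.down).trans (le_ciSup hbdd n.down)
      calc #(ULift.{u} ℕ) * ⨆ (n : ULift.{u} ℕ), #(L n.down) ≤
            ℵ₀ * ⨆ n, densChar (X ⧸ E n) := by rw [h1]; exact mul_le_mul' le_rfl h2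
        _ ≤ (⨆ n, densChar (X ⧸ E n)) * ⨆ n, densChar (X ⧸ E n) :=
            mul_le_mul' hsupκ le_rfl
        _ = ⨆ n, densChar (X ⧸ E n) := Cardinal.mul_eq_self hsupκ
    obtain ⟨D, hDcard, hdec⟩ := main_decomp ι x hx hcnt ⊤
      (by rw [Submodule.top_coe]; exact isClosed_univ) (⋃ n, L n)
    have hDle : #D ≤ ⨆ n, densChar (X ⧸ E n) := hDcard.trans (max_le hsupκ hGcard)
    obtain ⟨D2, hD2sub, hD2card, hD2cl⟩ :=
      exists_subset_closure_densChar ((⨅ n, E n : Submodule ℝ X) : Set X)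
    have hXdec : ∀ t ∈ (Set.univ : Set X),
        ∃ p w, t = p + w ∧ p ∈ closure D ∧ w ∈ closure D2 := by
      intro t _
      obtain ⟨p, _, hpD, hpN⟩ := hdec t Submodule.mem_top
      refine ⟨p, t - p, by abel, hpD, hD2cl ?_⟩
      exact Submodule.mem_iInf _ |>.2 fun n =>
        hLsep n _ fun g hg => hpN g (Set.mem_iUnion.2 ⟨n, hg⟩)
    have hdense : Dense (Set.image2 (· + ·) D D2) := fun v =>
      subset_closure_add hXdec (Set.mem_univ v)
    have hupper : densChar X ≤ max (densChar ↥(⨅ n, E n)) (⨆ n, densChar (X ⧸ E n)) := by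
      refine (densChar_le_of_dense hdense).trans ?_
      have himg : #(Set.image2 (· + ·) D D2) ≤
          max (densChar ↥(⨅ n, E n)) (⨆ n, densChar (X ⧸ E n)) := by
        refine (Cardinal.mk_image2_le).trans ?_
        have hM : ℵ₀ ≤ max (densChar ↥(⨅ n, E n)) (⨆ n, densChar (X ⧸ E n)) :=
          le_max_of_le_left aleph0_le_densChar
        calc #D * #D2 ≤ (max (densChar ↥(⨅ n, E n)) (⨆ n, densChar (X ⧸ E n))) *
              (max (densChar ↥(⨅ n, E n)) (⨆ n, densChar (X ⧸ E n))) :=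
              mul_le_mul' (hDle.trans (le_max_right _ _)) (hD2card.trans (le_max_left _ _))
          _ = _ := Cardinal.mul_eq_self hM
      exact max_le (le_max_of_le_left aleph0_le_densChar) himg
    have hlower : max (densChar ↥(⨅ n, E n)) (⨆ n, densChar (X ⧸ E n)) ≤ densChar X := by
      refine max_le ?_ (ciSup_le hκle)
      obtain ⟨s, hs, hscard⟩ := exists_dense_densChar X
      have hsub : ((⨅ n, E n : Submodule ℝ X) : Set X) ⊆ closure s := by
        intro v _
        rw [hs.closure_eq]
        trivial
      exact (densChar_coe_le hsub).trans (max_le aleph0_le_densChar hscard)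
    exact le_antisymm hupper hlower

end Aux

theorem stmt16 {X : Type u} [NormedAddCommGroup X] [NormedSpace ℝ X] [CompleteSpace X]
    (hwld : IsWLD X) :
    (∀ Y Z : Submodule ℝ X, IsClosed (Y : Set X) → IsClosed (Z : Set X) →
      ¬ TopologicalSpace.IsSeparable (Y : Set X) →
      TopologicalSpace.SeparableSpace (X ⧸ Z) →
      densChar ↥(Y ⊓ Z) = densChar ↥Y) ∧
    (∀ E : ℕ → Submodule ℝ X, (∀ n, IsClosed ((E n : Set X))) →
      densChar X = max (densChar ↥(⨅ n, E n)) (⨆ n, densChar (X ⧸ E n))) := by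
  obtain ⟨ι, x, f, -, -, hx, -, hcnt⟩ := hwld
  exact stmt16' ι x hx hcnt
end

section
/- Let X be a real Banach space with the property that for every countable sequence (f_n)_{n<ω} ⊆ X* there exists a family {x_γ}_{γ∈Γ} ⊆ X with closed linear span equal to X such that {γ ∈ Γ : f_n(x_γ) ≠ 0} is countable for every n < ω. Then X satisfies (σ): for every sequence (Z_n)_{n<ω} of closed subspaces of X with X/Z_n separable for each n, the quotient X/⋂_{n<ω}Z_n is separable. In particular, every WLD Banach space satisfies (σ). -/
open Cardinal Ordinal Set Pointwise

universe u

/-- property (σ): coseparable closed subspaces are stable under countable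
intersections, i.e. countable intersections of subspaces with separable quotient
again have separable quotient. -/
def SigmaProp (X : Type u) [NormedAddCommGroup X] [NormedSpace ℝ X] : Prop :=
  ∀ Z : ℕ → Submodule ℝ X, (∀ n, IsClosed ((Z n : Set X))) →
    (∀ n, TopologicalSpace.SeparableSpace (X ⧸ Z n)) →
    TopologicalSpace.SeparableSpace (X ⧸ (⨅ n, Z n))

/-- In a separable normed space there is a countable family of continuous linear
functionals separating points. -/
lemma sep_functionals (Y : Type*) [NormedAddCommGroup Y] [NormedSpace ℝ Y]
    [TopologicalSpace.SeparableSpace Y] :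
    ∃ g : ℕ → (Y →L[ℝ] ℝ), ∀ v : Y, (∀ k, g k v = 0) → v = 0 := by
  have : Nonempty Y := ⟨0⟩
  set y : ℕ → Y := TopologicalSpace.denseSeq Y with hy
  have hdr : DenseRange y := TopologicalSpace.denseRange_denseSeq Y
  classical
  refine ⟨fun k => if h : y k = 0 then 0 else (exists_dual_vector ℝ (y k) (norm_ne_zero_iff.mpr h)).choose, ?_⟩
  intro v hv
  by_contra hv0
  have hvpos : 0 < ‖v‖ := norm_pos_iff.mpr hv0
  obtain ⟨k, hk⟩ := Metric.denseRange_iff.mp hdr v (‖v‖/2) (by linarith)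
  have hdist : ‖v - y k‖ < ‖v‖/2 := by
    rw [← dist_eq_norm]; exact hk
  have hyk : ‖v‖/2 < ‖y k‖ := by
    have := norm_sub_norm_le v (y k)
    linarith [abs_le.mp (abs_norm_sub_norm_le v (y k))]
  have hykne : y k ≠ 0 := by
    intro h; rw [h, norm_zero] at hyk; linarith
  have hspec := (exists_dual_vector ℝ (y k) (norm_ne_zero_iff.mpr hykne)).choose_spec
  set g := (exists_dual_vector ℝ (y k) (norm_ne_zero_iff.mpr hykne)).choose
  have hgv : g v = 0 := by
    have := hv k
    simpa [hykne] using this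
  have h1 : g (y k) = g (y k - v) := by rw [map_sub, hgv]; ring
  have h2 : ‖g (y k - v)‖ ≤ ‖y k - v‖ := by
    calc ‖g (y k - v)‖ ≤ ‖g‖ * ‖y k - v‖ := g.le_opNorm _
    _ = ‖y k - v‖ := by rw [hspec.1, one_mul]
  have h3 : ‖y k - v‖ < ‖v‖/2 := by rwa [norm_sub_rev]
  have h4 : g (y k) = ‖y k‖ := hspec.2
  rw [h1] at h4
  have : ‖g (y k - v)‖ < ‖v‖/2 := lt_of_le_of_lt h2 h3
  rw [h4] at this
  rw [Real.norm_eq_abs, abs_of_nonneg (norm_nonneg _)] at this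
  linarith

/-- A closed subspace with separable quotient is a countable intersection of kernels. -/
lemma cosep_functionals {X : Type u} [NormedAddCommGroup X] [NormedSpace ℝ X]
    (Z : Submodule ℝ X) (hc : IsClosed (Z : Set X))
    [TopologicalSpace.SeparableSpace (X ⧸ Z)] :
    ∃ f : ℕ → (X →L[ℝ] ℝ), ∀ v : X, (∀ k, f k v = 0) → v ∈ Z := by
  haveI : IsClosed ((Z : Set X)) := hc
  obtain ⟨g, hg⟩ := sep_functionals (X ⧸ Z)
  refine ⟨fun k => (g k).comp ⟨Z.mkQ, continuous_quot_mk⟩, fun v hv => ?_⟩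
  have : (Z.mkQ v : X ⧸ Z) = 0 := hg _ (fun k => hv k)
  rwa [← Submodule.Quotient.mk_eq_zero]

theorem main_thm {X : Type u} [NormedAddCommGroup X] [NormedSpace ℝ X]
    (H : ∀ f : ℕ → (X →L[ℝ] ℝ), ∃ (Γ : Type u) (x : Γ → X),
        closedSpan (Set.range x) = ⊤ ∧ ∀ n, {γ | f n (x γ) ≠ 0}.Countable)
    (Z : ℕ → Submodule ℝ X) (hZc : ∀ n, IsClosed ((Z n : Set X)))
    (hZs : ∀ n, TopologicalSpace.SeparableSpace (X ⧸ Z n)) :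
    TopologicalSpace.SeparableSpace (X ⧸ (⨅ n, Z n)) := by
  have key : ∀ n, ∃ f : ℕ → X →L[ℝ] ℝ, ∀ v : X, (∀ k, f k v = 0) → v ∈ Z n := by
    intro n
    haveI := hZs n
    exact cosep_functionals (Z n) (hZc n)
  choose f hf using key
  set F : ℕ → X →L[ℝ] ℝ := fun m => f (Nat.unpair m).1 (Nat.unpair m).2 with hF
  obtain ⟨Γ, x, hspan, hcount⟩ := H F
  set C : Set Γ := ⋃ m, {γ | F m (x γ) ≠ 0} with hCdef
  have hC : C.Countable := Set.countable_iUnion hcount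
  set Q : Submodule ℝ X := ⨅ n, Z n with hQ
  have hmem : ∀ γ ∉ C, x γ ∈ Q := by
    intro γ hγ
    have hzero : ∀ m, F m (x γ) = 0 := by
      intro m
      by_contra h
      exact hγ (Set.mem_iUnion.mpr ⟨m, h⟩)
    rw [hQ, Submodule.mem_iInf]
    intro n
    apply hf n
    intro k
    have := hzero (Nat.pair n k)
    simpa [hF, Nat.unpair_pair] using this
  set T : Set (X ⧸ Q) := Q.mkQ '' (x '' C) with hT
  have hTc : T.Countable := (hC.image x).image Q.mkQ
  have hsub : Q.mkQ '' (Set.range x) ⊆ (Submodule.span ℝ T : Set (X ⧸ Q)) := by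
    rintro _ ⟨_, ⟨γ, rfl⟩, rfl⟩
    by_cases hγ : γ ∈ C
    · exact Submodule.subset_span ⟨x γ, ⟨γ, hγ, rfl⟩, rfl⟩
    · have : Q.mkQ (x γ) = 0 := by
        rw [Submodule.mkQ_apply, Submodule.Quotient.mk_eq_zero]
        exact hmem γ hγ
      rw [this]; exact (Submodule.span ℝ T).zero_mem
  have hdense : Dense (Submodule.span ℝ T : Set (X ⧸ Q)) := by
    rw [dense_iff_closure_eq]
    apply Set.eq_univ_of_forall
    intro y
    obtain ⟨v, rfl⟩ := Submodule.Quotient.mk_surjective Q y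
    have hvcl : v ∈ closure (Submodule.span ℝ (Set.range x) : Set X) := by
      have : closure ((Submodule.span ℝ (Set.range x) : Submodule ℝ X) : Set X) = Set.univ := by
        have := congrArg (fun (s : Submodule ℝ X) => (s : Set X)) hspan
        simpa [closedSpan, Submodule.topologicalClosure_coe] using this
      rw [this]; trivial
    have hcont : Continuous (Q.mkQ) := continuous_quot_mk
    have h1 : (Q.mkQ) v ∈ Q.mkQ '' (closure (Submodule.span ℝ (Set.range x) : Set X)) :=
      ⟨v, hvcl, rfl⟩
    have h2 : Q.mkQ '' (closure (Submodule.span ℝ (Set.range x) : Set X)) ⊆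
        closure (Q.mkQ '' (Submodule.span ℝ (Set.range x) : Set X)) :=
      image_closure_subset_closure_image hcont
    have h3 : Q.mkQ '' ((Submodule.span ℝ (Set.range x) : Submodule ℝ X) : Set X) ⊆
        (Submodule.span ℝ T : Set (X ⧸ Q)) := by
      have : Submodule.map Q.mkQ (Submodule.span ℝ (Set.range x)) ≤ Submodule.span ℝ T := by
        rw [Submodule.map_span]
        exact Submodule.span_le.mpr hsub
      intro z hz
      obtain ⟨w, hw, rfl⟩ := hz
      exact this (Submodule.mem_map_of_mem hw)
    have := h2 h1
    exact closure_mono h3 this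
  have hsep : TopologicalSpace.IsSeparable (Submodule.span ℝ T : Set (X ⧸ Q)) :=
    hTc.isSeparable.span
  rw [← TopologicalSpace.isSeparable_univ_iff]
  have : TopologicalSpace.IsSeparable (closure (Submodule.span ℝ T : Set (X ⧸ Q))) :=
    hsep.closure
  rwa [dense_iff_closure_eq.mp hdense] at this

theorem stmt17 {X : Type u} [NormedAddCommGroup X] [NormedSpace ℝ X] [CompleteSpace X] :
    ((∀ f : ℕ → (X →L[ℝ] ℝ), ∃ (Γ : Type u) (x : Γ → X),
        closedSpan (Set.range x) = ⊤ ∧ ∀ n, {γ | f n (x γ) ≠ 0}.Countable) →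
      SigmaProp X) ∧
    (IsWLD X → SigmaProp X) := by
  have main : (∀ f : ℕ → (X →L[ℝ] ℝ), ∃ (Γ : Type u) (x : Γ → X),
      closedSpan (Set.range x) = ⊤ ∧ ∀ n, {γ | f n (x γ) ≠ 0}.Countable) →
      SigmaProp X := fun H Z hZc hZs => main_thm H Z hZc hZs
  refine ⟨main, fun hwld => ?_⟩
  obtain ⟨ι, x, f, _, _, hspan, _, hcount⟩ := hwld
  exact main fun g => ⟨ι, x, hspan, fun n => hcount (g n)⟩
end

section
/- Let X be a real Banach space satisfying condition (II) that admits an M-basis {(x_α, x*_α)}_{α<λ}. Then for every f ∈ X* the set {α < λ : f(x_α) ≠ 0} is countable; consequently, X is WLD, so that for Banach spaces admitting an M-basis, condition (II), Corson's property (C), and being WLD are all equivalent. -/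
open Cardinal Ordinal Set Pointwise

universe u

/-- condition (II) -/
def CondII (X : Type u) [SeminormedAddCommGroup X] [NormedSpace ℝ X] : Prop :=
  ∀ κ : Cardinal.{u}, κ.IsRegular → ℵ₀ < κ →
    ∀ Z : Ordinal.{u} → Submodule ℝ X,
      (∀ α < κ.ord, IsClosed ((Z α : Set X))) →
      (∀ α β, α ≤ β → β < κ.ord → Z β ≤ Z α) →
      ∀ f : X →L[ℝ] ℝ, (∀ v ∈ ⋂ α ∈ Set.Iio κ.ord, (Z α : Set X), f v = 0) →
        ∃ α < κ.ord, ∀ v ∈ Z α, f v = 0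

/-- Corson's property (C) -/
def PropertyC (X : Type u) [SeminormedAddCommGroup X] [NormedSpace ℝ X] : Prop :=
  ∀ 𝒞 : Set (Set X), (∀ C ∈ 𝒞, IsClosed C ∧ Convex ℝ C) → ⋂₀ 𝒞 = ∅ →
    ∃ 𝒟 ⊆ 𝒞, 𝒟.Countable ∧ ⋂₀ 𝒟 = ∅

set_option linter.unusedVariables false
set_option linter.unusedSectionVars false
set_option linter.unusedTactic false
set_option maxHeartbeats 1000000

open Filter Topology

section Helpers

variable {X : Type u} [NormedAddCommGroup X] [NormedSpace ℝ X]

lemma vanish_closedSpan {h : X →L[ℝ] ℝ} {s : Set X} (hz : ∀ y ∈ s, h y = 0) :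
    ∀ v ∈ closedSpan s, h v = 0 := by
  intro v hv
  have h1 : Submodule.span ℝ s ≤ LinearMap.ker (h : X →ₗ[ℝ] ℝ) :=
    Submodule.span_le.mpr (fun y hy => LinearMap.mem_ker.mpr (hz y hy))
  have h2 : closedSpan s ≤ LinearMap.ker (h : X →ₗ[ℝ] ℝ) :=
    Submodule.topologicalClosure_minimal _ h1 (ContinuousLinearMap.isClosed_ker h)
  exact LinearMap.mem_ker.mp (h2 hv)

lemma countable_support (hII : CondII X) (lam : Ordinal.{u})
    (x : Ordinal.{u} → X) (f : Ordinal.{u} → (X →L[ℝ] ℝ))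
    (hbiorth : ∀ α < lam, ∀ β < lam, f α (x β) = if α = β then 1 else 0)
    (hsep : ∀ v : X, v ≠ 0 → ∃ α < lam, f α v ≠ 0)
    (g : X →L[ℝ] ℝ) : {α : Ordinal.{u} | α < lam ∧ g (x α) ≠ 0}.Countable := by
  by_contra hc
  set S := {α : Ordinal.{u} | α < lam ∧ g (x α) ≠ 0} with hS
  set w1 : Ordinal.{u} := (ℵ₁ : Cardinal.{u}).ord with hw1
  -- get an embedding of Iio w1 into S
  have h1 : ℵ₀ < #S := by
    rw [← not_le]
    intro hle
    exact hc (Cardinal.le_aleph0_iff_set_countable.mp hle)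
  have h2 : #(Set.Iio w1) ≤ #S := by
    rw [hw1, Ordinal.mk_Iio_ordinal, Cardinal.card_ord, Cardinal.lift_aleph, Ordinal.lift_one,
      ← Cardinal.succ_aleph0]
    exact Order.succ_le_of_lt h1
  obtain ⟨emb⟩ := (Cardinal.le_def _ _).mp h2
  set e : Ordinal.{u} → Ordinal.{u} :=
    fun ξ => if h : ξ < w1 then (emb ⟨ξ, h⟩ : Ordinal.{u}) else 0 with he
  have he_mem : ∀ {ξ : Ordinal.{u}}, ξ < w1 → e ξ ∈ S := by
    intro ξ hξ; rw [he]; simp only [hξ, dif_pos]; exact (emb ⟨ξ, hξ⟩).2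
  have he_inj : ∀ {ξ η : Ordinal.{u}}, ξ < w1 → η < w1 → e ξ = e η → ξ = η := by
    intro ξ η hξ hη heq
    rw [he] at heq; simp only [hξ, hη, dif_pos] at heq
    have := emb.injective (Subtype.ext heq)
    exact congrArg Subtype.val this
  set Z : Ordinal.{u} → Submodule ℝ X :=
    fun ξ => closedSpan (x '' (e '' (Set.Iio w1 ∩ Set.Ici ξ))) with hZ
  have hlim : Order.IsSuccLimit w1 := by
    rw [hw1]; exact Cardinal.isSuccLimit_ord (Cardinal.aleph0_lt_aleph_one.le)
  have hvan : ∀ v ∈ ⋂ α ∈ Set.Iio w1, ((Z α : Submodule ℝ X) : Set X), g v = 0 := by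
    intro v hv
    have hv0 : v = 0 := by
      by_contra hvne
      obtain ⟨β, hβ, hfβ⟩ := hsep v hvne
      -- find ξ < w1 such that β avoids the tail image
      have : ∃ ξ : Ordinal.{u}, ξ < w1 ∧ β ∉ e '' (Set.Iio w1 ∩ Set.Ici ξ) := by
        by_cases hcase : ∃ η : Ordinal.{u}, η < w1 ∧ e η = β
        · obtain ⟨η, hη, hηβ⟩ := hcase
          refine ⟨Order.succ η, hlim.succ_lt hη, ?_⟩
          rintro ⟨η', ⟨hη', hη'2⟩, hη'β⟩
          have : η' = η := he_inj hη' hη (hη'β.trans hηβ.symm)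
          rw [this] at hη'2
          exact absurd hη'2 (not_le.mpr (Order.lt_succ η))
        · push_neg at hcase
          exact ⟨0, hlim.pos, fun ⟨η', ⟨hη', _⟩, hη'β⟩ => hcase η' hη' hη'β⟩
      obtain ⟨ξ, hξ, hβξ⟩ := this
      have hvanish : ∀ y ∈ x '' (e '' (Set.Iio w1 ∩ Set.Ici ξ)), f β y = 0 := by
        rintro y ⟨i, hi, rfl⟩
        obtain ⟨η, hη, rfl⟩ := hi
        have hiS : e η ∈ S := he_mem hη.1
        have hne : β ≠ e η := fun hb => hβξ ⟨η, hη, hb.symm⟩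
        rw [hbiorth β hβ (e η) hiS.1, if_neg hne]
      have hvZ : v ∈ (Z ξ : Set X) := by
        have := Set.mem_iInter₂.mp hv ξ hξ
        exact this
      exact hfβ (vanish_closedSpan hvanish v hvZ)
    rw [hv0, map_zero]
  obtain ⟨ξ, hξ, hzero⟩ := hII ℵ₁ Cardinal.isRegular_aleph_one Cardinal.aleph0_lt_aleph_one Z
    (fun α _ => Submodule.isClosed_topologicalClosure _)
    (fun α β hab hβ => Submodule.topologicalClosure_mono (Submodule.span_mono
      (Set.image_mono (Set.image_mono
        (Set.inter_subset_inter_right _ (Set.Ici_subset_Ici.mpr hab))))))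
    g hvan
  have hmem : x (e ξ) ∈ (Z ξ : Set X) := by
    apply Submodule.le_topologicalClosure
    exact Submodule.subset_span ⟨e ξ, ⟨ξ, ⟨hξ, le_refl ξ⟩, rfl⟩, rfl⟩
  exact (he_mem hξ).2 (hzero _ hmem)

lemma wld_package (lam : Ordinal.{u})
    (x : Ordinal.{u} → X) (f : Ordinal.{u} → (X →L[ℝ] ℝ))
    (hbiorth : ∀ α < lam, ∀ β < lam, f α (x β) = if α = β then 1 else 0)
    (hgen : closedSpan (x '' Set.Iio lam) = ⊤)
    (hsep : ∀ v : X, v ≠ 0 → ∃ α < lam, f α v ≠ 0)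
    (hcnt : ∀ g : X →L[ℝ] ℝ, {α : Ordinal.{u} | α < lam ∧ g (x α) ≠ 0}.Countable) :
    IsWLD X := by
  set iso := Ordinal.ToType.mk (o := lam) with hiso
  refine ⟨lam.ToType, fun i => x (iso.symm i : Ordinal.{u}), fun i => f (iso.symm i : Ordinal.{u}),
    ?_, ?_, ?_, ?_, ?_⟩
  · intro i
    rw [hbiorth _ (iso.symm i).2 _ (iso.symm i).2, if_pos rfl]
  · intro i j hij
    rw [hbiorth _ (iso.symm i).2 _ (iso.symm j).2, if_neg]
    intro hval
    exact hij (by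
      have : iso.symm i = iso.symm j := Subtype.ext hval
      simpa using congrArg iso this)
  · have : Set.range (fun i => x (iso.symm i : Ordinal.{u})) = x '' Set.Iio lam := by
      rw [show (fun i => x ((iso.symm i : Set.Iio lam) : Ordinal.{u}))
          = x ∘ (fun i => ((iso.symm i : Set.Iio lam) : Ordinal.{u})) from rfl,
        Set.range_comp]
      congr 1
      rw [show (fun i => ((iso.symm i : Set.Iio lam) : Ordinal.{u}))
          = Subtype.val ∘ (fun i => (iso.symm i : Set.Iio lam)) from rfl, Set.range_comp]
      rw [iso.symm.surjective.range_eq, Set.image_univ, Subtype.range_coe]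
    rw [this, hgen]
  · intro v hv
    obtain ⟨α, hα, hfα⟩ := hsep v hv
    refine ⟨iso ⟨α, hα⟩, ?_⟩
    simpa using hfα
  · intro g
    have : {i | g (x (iso.symm i : Ordinal.{u})) ≠ 0}
        = (fun i => ((iso.symm i : Set.Iio lam) : Ordinal.{u})) ⁻¹'
          {α : Ordinal.{u} | α < lam ∧ g (x α) ≠ 0} := by
      ext i
      simp only [Set.mem_setOf_eq, Set.mem_preimage]
      exact ⟨fun h => ⟨(iso.symm i).2, h⟩, fun h => h.2⟩
    rw [this]
    exact (hcnt g).preimage (Subtype.val_injective.comp iso.symm.injective)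

/-- rational span of `{x i : i ∈ s}` -/
def ratSpan (x : Ordinal.{u} → X) (s : Set Ordinal.{u}) : Set X :=
  {v | ∃ F : Finset Ordinal.{u}, ↑F ⊆ s ∧ ∃ q : Ordinal.{u} → ℚ,
    v = ∑ i ∈ F, (q i : ℝ) • x i}

lemma ratSpan_mono (x : Ordinal.{u} → X) {s t : Set Ordinal.{u}} (h : s ⊆ t) :
    ratSpan x s ⊆ ratSpan x t := by
  rintro v ⟨F, hF, q, rfl⟩
  exact ⟨F, hF.trans h, q, rfl⟩

lemma ratSpan_countable (x : Ordinal.{u} → X) {s : Set Ordinal.{u}} (hs : s.Countable) :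
    (ratSpan x s).Countable := by
  have hP : {F : Finset Ordinal.{u} | ↑F ⊆ s}.Countable := by
    have h1 := Set.countable_setOf_finite_subset hs
    have : {F : Finset Ordinal.{u} | ↑F ⊆ s}
        ⊆ ((↑) : Finset Ordinal.{u} → Set Ordinal.{u}) ⁻¹' {t | t.Finite ∧ t ⊆ s} := by
      intro F hF
      exact ⟨F.finite_toSet, hF⟩
    exact (h1.preimage (Finset.coe_injective)).mono this
  have : ratSpan x s ⊆ ⋃ F ∈ {F : Finset Ordinal.{u} | ↑F ⊆ s},
      Set.range (fun q : {i // i ∈ F} → ℚ =>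
        ∑ i ∈ F.attach, (q i : ℝ) • x i.1) := by
    rintro v ⟨F, hF, q, rfl⟩
    refine Set.mem_biUnion hF ⟨fun i => q i.1, ?_⟩
    show ∑ i ∈ F.attach, ((q i.1 : ℚ) : ℝ) • x i.1 = ∑ i ∈ F, (q i : ℝ) • x i
    exact Finset.sum_attach F (fun i => (q i : ℝ) • x i)

  refine Set.Countable.mono this ?_
  refine hP.biUnion (fun F _ => ?_)
  exact Set.countable_range _

lemma ratSpan_sub_span (x : Ordinal.{u} → X) (s : Set Ordinal.{u}) :
    ratSpan x s ⊆ (Submodule.span ℝ (x '' s) : Set X) := by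
  rintro v ⟨F, hF, q, rfl⟩
  refine Submodule.sum_mem _ (fun i hi => ?_)
  exact Submodule.smul_mem _ _ (Submodule.subset_span ⟨i, hF hi, rfl⟩)

lemma ratSpan_closure (x : Ordinal.{u} → X) (s : Set Ordinal.{u}) :
    closure (ratSpan x s) = ((closedSpan (x '' s) : Submodule ℝ X) : Set X) := by
  apply Set.Subset.antisymm
  · refine closure_minimal ?_ (Submodule.isClosed_topologicalClosure _)
    exact (ratSpan_sub_span x s).trans (Submodule.le_topologicalClosure _)
  · -- closedSpan ⊆ closure (ratSpan)
    have hspan : (Submodule.span ℝ (x '' s) : Set X) ⊆ closure (ratSpan x s) := by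
      intro v hv
      induction hv using Submodule.span_induction with
      | mem v hv =>
        obtain ⟨i, hi, rfl⟩ := hv
        apply subset_closure
        exact ⟨{i}, by simpa using hi, fun _ => (1 : ℚ), by simp⟩
      | zero =>
        apply subset_closure
        exact ⟨∅, by simp, fun _ => 0, by simp⟩
      | add a b _ _ ha hb =>
        -- use sequences
        obtain ⟨ua, hua, halim⟩ := mem_closure_iff_seq_limit.mp ha
        obtain ⟨ub, hub, hblim⟩ := mem_closure_iff_seq_limit.mp hb
        refine mem_closure_of_tendsto (halim.add hblim) ?_
        filter_upwards with k
        obtain ⟨F, hF, q, hq⟩ := hua k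
        obtain ⟨F', hF', q', hq'⟩ := hub k
        refine ⟨F ∪ F', by simp [Finset.coe_union, Set.union_subset_iff, hF, hF'], 
          fun i => (if i ∈ F then q i else 0) + (if i ∈ F' then q' i else 0), ?_⟩
        have : ∀ i ∈ F ∪ F',
            (((if i ∈ F then q i else 0) + (if i ∈ F' then q' i else 0) : ℚ) : ℝ) • x i
            = (if i ∈ F then (q i : ℝ) • x i else 0) + (if i ∈ F' then (q' i : ℝ) • x i else 0) := by
          intro i _
          push_cast
          rw [add_smul]
          congr 1 <;> split <;> simp
        rw [Finset.sum_congr rfl this, Finset.sum_add_distrib,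
          Finset.sum_ite_mem, Finset.sum_ite_mem,
          Finset.union_inter_cancel_left, Finset.union_inter_cancel_right, hq, hq']
      | smul r a _ ha =>
        -- ε-argument
        rw [Metric.mem_closure_iff]
        intro ε hε
        obtain ⟨a', ha', hd⟩ := Metric.mem_closure_iff.mp ha
          (min 1 (ε / (2 * (|r| + 1)))) (by positivity)
        obtain ⟨qr, hqr⟩ := exists_rat_near r
          (show (0:ℝ) < ε / (2 * (‖a'‖ + 1)) by positivity)
        refine ⟨(qr : ℝ) • a', ?_, ?_⟩
        · obtain ⟨F, hF, q, rfl⟩ := ha'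
          refine ⟨F, hF, fun i => qr * q i, ?_⟩
          rw [Finset.smul_sum]
          refine Finset.sum_congr rfl (fun i _ => ?_)
          rw [smul_smul]
          push_cast
          ring_nf
        · have h1 : dist (r • a) ((qr:ℝ) • a') ≤ |r| * dist a a' + |r - qr| * ‖a'‖ := by
            rw [dist_eq_norm, dist_eq_norm]
            calc ‖r • a - (qr:ℝ) • a'‖ = ‖r • (a - a') + (r - qr) • a'‖ := by
                  congr 1; rw [smul_sub, sub_smul]; abel
            _ ≤ ‖r • (a - a')‖ + ‖(r - (qr:ℝ)) • a'‖ := norm_add_le _ _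
            _ = |r| * ‖a - a'‖ + |r - qr| * ‖a'‖ := by
                  rw [norm_smul, norm_smul, Real.norm_eq_abs, Real.norm_eq_abs]
          have hpos : (0:ℝ) < |r| + 1 := by positivity
          have h2 : |r| * dist a a' < ε / 2 := by
            have heq : |r| * (ε / (2 * (|r| + 1))) = (|r| / (|r| + 1)) * (ε / 2) := by
              field_simp
              try exact Or.inl trivial
            calc |r| * dist a a' ≤ |r| * (ε / (2 * (|r| + 1))) :=
                  mul_le_mul_of_nonneg_left ((le_min_iff.mp hd.le).2) (abs_nonneg r)
            _ = (|r| / (|r| + 1)) * (ε / 2) := heq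
            _ < 1 * (ε / 2) :=
                  mul_lt_mul_of_pos_right ((div_lt_one hpos).mpr (by linarith)) (by positivity)
            _ = ε / 2 := one_mul _
          have h3 : |r - (qr:ℝ)| * ‖a'‖ < ε / 2 := by
            calc |r - (qr:ℝ)| * ‖a'‖ ≤ |r - (qr:ℝ)| * (‖a'‖ + 1) :=
                  mul_le_mul_of_nonneg_left (by linarith [norm_nonneg a']) (abs_nonneg _)
            _ < (ε / (2 * (‖a'‖ + 1))) * (‖a'‖ + 1) :=
                  mul_lt_mul_of_pos_right hqr (by positivity)
            _ = ε / 2 := by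
                  field_simp
          linarith
    calc ((closedSpan (x '' s) : Submodule ℝ X) : Set X)
        = closure (Submodule.span ℝ (x '' s) : Set X) := rfl
    _ ⊆ closure (closure (ratSpan x s)) := closure_mono hspan
    _ = closure (ratSpan x s) := closure_closure

lemma lindelof_selection {A : Set X} (hA : TopologicalSpace.IsSeparable A)
    {ι : Type u} (U : ι → Set X) (hU : ∀ i, IsOpen (U i)) :
    ∃ T : Set ι, T.Countable ∧ ∀ w ∈ A, (∃ i, w ∈ U i) → ∃ i ∈ T, w ∈ U i := by
  haveI : TopologicalSpace.SeparableSpace A := hA.separableSpace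
  haveI : SecondCountableTopology A :=
    UniformSpace.secondCountable_of_separable A
  obtain ⟨T, hT, heq⟩ := TopologicalSpace.isOpen_iUnion_countable
    (fun i => ((Subtype.val) ⁻¹' (U i) : Set A)) (fun i => (hU i).preimage continuous_subtype_val)
  refine ⟨T, hT, ?_⟩
  rintro w hw ⟨i, hi⟩
  have hmem : (⟨w, hw⟩ : A) ∈ ⋃ i, ((Subtype.val) ⁻¹' (U i) : Set A) :=
    Set.mem_iUnion.mpr ⟨i, hi⟩
  rw [← heq] at hmem
  obtain ⟨j, hj, hjmem⟩ := Set.mem_iUnion₂.mp hmem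
  exact ⟨j, hj, hjmem⟩

lemma subset_closedSpan (s : Set X) : s ⊆ (closedSpan s : Set X) :=
  fun y hy => Submodule.le_topologicalClosure _ (Submodule.subset_span hy)

lemma closedSpan_separable (x : Ordinal.{u} → X) {s : Set Ordinal.{u}} (hs : s.Countable) :
    TopologicalSpace.IsSeparable ((closedSpan (x '' s) : Submodule ℝ X) : Set X) :=
  ⟨ratSpan x s, ratSpan_countable x hs, by rw [← ratSpan_closure]⟩

theorem propertyC_of_countable_support [CompleteSpace X]
    (lam : Ordinal.{u}) (x : Ordinal.{u} → X)
    (hgen : closedSpan (x '' Set.Iio lam) = ⊤)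
    (hcnt : ∀ g : X →L[ℝ] ℝ, {α : Ordinal.{u} | α < lam ∧ g (x α) ≠ 0}.Countable) :
    PropertyC X := by
  intro 𝒞 h𝒞 hempty
  by_cases hexe : ∃ C ∈ 𝒞, C = ∅
  · obtain ⟨C, hC, hCe⟩ := hexe
    exact ⟨{C}, by simpa using hC, Set.countable_singleton _, by simp [hCe]⟩
  push_neg at hexe
  rcases subsingleton_or_nontrivial X with hsub | hnt
  · exfalso
    have h0 : (0:X) ∈ ⋂₀ 𝒞 := Set.mem_sInter.mpr (fun C hC => by
      obtain ⟨c, hc⟩ := hexe C hC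
      rwa [Subsingleton.elim c 0] at hc)
    rw [hempty] at h0
    exact h0
  -- separation data at every point
  have hchoice : ∀ v : X, ∃ (C : Set X) (g : X →L[ℝ] ℝ) (t : ℝ),
      C ∈ 𝒞 ∧ v ∉ C ∧ ‖g‖ ≤ 1 ∧ (∀ c ∈ C, g c < t) ∧ t < g v := by
    intro v
    have hv : v ∉ ⋂₀ 𝒞 := by rw [hempty]; exact Set.notMem_empty v
    rw [Set.mem_sInter] at hv
    push_neg at hv
    obtain ⟨C, hC, hvC⟩ := hv
    obtain ⟨f0, t0, hf0, ht0⟩ :=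
      geometric_hahn_banach_closed_point (h𝒞 C hC).2 (h𝒞 C hC).1 hvC
    obtain ⟨c, hc⟩ := hexe C hC
    have hne : f0 ≠ 0 := by
      intro h0
      rw [h0] at hf0 ht0
      have h1 := hf0 c hc
      simp only [ContinuousLinearMap.zero_apply] at h1 ht0
      linarith
    have hpos : 0 < ‖f0‖ := norm_pos_iff.mpr hne
    refine ⟨C, ‖f0‖⁻¹ • f0, ‖f0‖⁻¹ * t0, hC, hvC, ?_, ?_, ?_⟩
    · have hns := norm_smul (‖f0‖⁻¹) f0
      rw [norm_inv, norm_norm] at hns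
      rw [hns, inv_mul_cancel₀ hpos.ne']
    · intro c' hc'
      simp only [ContinuousLinearMap.coe_smul', Pi.smul_apply, _root_.smul_eq_mul]
      exact mul_lt_mul_of_pos_left (hf0 c' hc') (inv_pos.mpr hpos)
    · simp only [ContinuousLinearMap.coe_smul', Pi.smul_apply, _root_.smul_eq_mul]
      exact mul_lt_mul_of_pos_left ht0 (inv_pos.mpr hpos)
  choose Cv gv tv hCv hvC hgnorm hglt hgv using hchoice
  -- norming functionals
  have hnorm : ∀ w : X, ∃ h : X →L[ℝ] ℝ, ‖h‖ ≤ 1 ∧ h w = ‖w‖ := by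
    intro w
    by_cases hw : w = 0
    · exact ⟨0, by simp, by simp [hw]⟩
    · obtain ⟨h, h1, h2⟩ := exists_dual_vector ℝ w (norm_ne_zero_iff.mpr hw)
      exact ⟨h, le_of_eq h1, by exact_mod_cast h2⟩
  choose nf hnf1 hnf2 using hnorm
  -- supports
  set Sup : (X →L[ℝ] ℝ) → Set Ordinal.{u} := fun h => {i | i < lam ∧ h (x i) ≠ 0} with hSup
  have hSupvan : ∀ (h : X →L[ℝ] ℝ) (M : Set Ordinal.{u}), Sup h ⊆ M →
      ∀ b ∈ closedSpan (x '' (Set.Iio lam \ M)), h b = 0 := by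
    intro h M hM
    apply vanish_closedSpan
    rintro y ⟨i, ⟨hilt, hiM⟩, rfl⟩
    by_contra hne
    exact hiM (hM ⟨hilt, hne⟩)
  -- half-space cover sets with margin
  set U : ℕ → X → Set X := fun m v => {y | tv v + 1/((m:ℝ)+1) < gv v y} with hU
  have hUopen : ∀ m v, IsOpen (U m v) := fun m v =>
    isOpen_lt continuous_const (gv v).continuous
  -- Lindelöf selections
  have hsel : ∀ s : {s : Set Ordinal.{u} // s.Countable}, ∀ m : ℕ,
      ∃ T : Set X, T.Countable ∧ ∀ w ∈ ((closedSpan (x '' s.1) : Submodule ℝ X) : Set X),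
        (∃ v : X, w ∈ U m v) → ∃ v ∈ T, w ∈ U m v :=
    fun s m => lindelof_selection (closedSpan_separable x s.2) (U m) (hUopen m)
  choose Tsel hTcnt hTcov using hsel
  -- the recursion
  set step : {s : Set Ordinal.{u} // s.Countable} → {s : Set Ordinal.{u} // s.Countable} :=
    fun s => ⟨s.1 ∪ ((⋃ w ∈ ratSpan x s.1, Sup (nf w)) ∪ ⋃ m : ℕ, ⋃ v ∈ Tsel s m, Sup (gv v)),
      s.2.union ((((ratSpan_countable x s.2).biUnion (fun w _ => hcnt _))).union
        (Set.countable_iUnion (fun m => (hTcnt s m).biUnion (fun v _ => hcnt _))))⟩ with hstep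
  set M : ℕ → {s : Set Ordinal.{u} // s.Countable} :=
    fun n => step^[n] ⟨∅, Set.countable_empty⟩ with hM
  have hMsucc : ∀ n, M (n+1) = step (M n) := fun n => Function.iterate_succ_apply' step n _
  have hMmono : Monotone (fun n => (M n).1) := by
    apply monotone_nat_of_le_succ
    intro n
    rw [hMsucc]
    exact Set.subset_union_left
  set Mw : Set Ordinal.{u} := ⋃ n, (M n).1 with hMw
  set V : Set X := ⋃ n, ⋃ m, Tsel (M n) m with hV
  have hVcnt : V.Countable :=
    Set.countable_iUnion (fun n => Set.countable_iUnion (fun m => hTcnt _ _))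
  refine ⟨Cv '' V, ?_, hVcnt.image _, ?_⟩
  · rintro _ ⟨v, hv, rfl⟩
    exact hCv v
  rw [Set.eq_empty_iff_forall_notMem]
  intro z hz
  have hzC : ∀ v ∈ V, z ∈ Cv v := fun v hv =>
    Set.mem_sInter.mp hz _ (Set.mem_image_of_mem _ hv)
  set A : Submodule ℝ X := closedSpan (x '' Mw) with hA
  set B : Submodule ℝ X := closedSpan (x '' (Set.Iio lam \ Mw)) with hB
  -- finite subsets of the union
  have hfin : ∀ F : Finset Ordinal.{u}, ↑F ⊆ Mw → ∃ n, ↑F ⊆ (M n).1 := by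
    intro F
    induction F using Finset.induction_on with
    | empty => exact fun _ => ⟨0, by simp⟩
    | insert _ _ hiF ih =>
      rename_i i F'
      intro hins
      rw [Finset.coe_insert, Set.insert_subset_iff] at hins
      obtain ⟨n₁, hn₁⟩ := Set.mem_iUnion.mp hins.1
      obtain ⟨n₂, hn₂⟩ := ih hins.2
      refine ⟨max n₁ n₂, ?_⟩
      rw [Finset.coe_insert, Set.insert_subset_iff]
      exact ⟨hMmono (le_max_left n₁ n₂) hn₁, hn₂.trans (hMmono (le_max_right n₁ n₂))⟩
  have hTdec : ∀ w ∈ ratSpan x Mw, ∃ n, w ∈ ratSpan x (M n).1 := by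
    rintro w ⟨F, hF, q, rfl⟩
    obtain ⟨n, hn⟩ := hfin F hF
    exact ⟨n, F, hn, q, rfl⟩
  have hnfsupp : ∀ n, ∀ w ∈ ratSpan x (M n).1, Sup (nf w) ⊆ Mw := by
    intro n w hw
    have h1 : Sup (nf w) ⊆ (M (n+1)).1 := by
      rw [hMsucc]
      intro i hi
      exact Set.mem_union_right _ (Set.mem_union_left _ (Set.mem_biUnion hw hi))
    exact h1.trans (Set.subset_iUnion (fun n => (M n).1) (n+1))
  -- norming inequality
  have hk2 : ∀ a ∈ A, ∀ b ∈ B, ‖a‖ ≤ ‖a + b‖ := by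
    intro a ha b hb
    have haT : a ∈ closure (ratSpan x Mw) := by rw [ratSpan_closure]; exact ha
    obtain ⟨w, hwmem, hwlim⟩ := mem_closure_iff_seq_limit.mp haT
    have key : ∀ k, ‖w k‖ ≤ ‖a + b‖ + ‖w k - a‖ := by
      intro k
      obtain ⟨n, hn⟩ := hTdec (w k) (hwmem k)
      have hb0 : nf (w k) b = 0 := hSupvan _ _ (hnfsupp n _ hn) b hb
      have heq : (‖w k‖ : ℝ) = nf (w k) (a + b) + nf (w k) (w k - a) - nf (w k) b := by
        rw [← hnf2 (w k), ← map_add, ← map_sub]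
        congr 1
        abel
      have h1 : nf (w k) (a + b) ≤ ‖a + b‖ := by
        calc nf (w k) (a + b) ≤ |nf (w k) (a + b)| := le_abs_self _
        _ ≤ ‖nf (w k)‖ * ‖a + b‖ := (nf (w k)).le_opNorm _
        _ ≤ 1 * ‖a + b‖ := mul_le_mul_of_nonneg_right (hnf1 _) (norm_nonneg _)
        _ = ‖a + b‖ := one_mul _
      have h2 : nf (w k) (w k - a) ≤ ‖w k - a‖ := by
        calc nf (w k) (w k - a) ≤ |nf (w k) (w k - a)| := le_abs_self _
        _ ≤ ‖nf (w k)‖ * ‖w k - a‖ := (nf (w k)).le_opNorm _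
        _ ≤ 1 * ‖w k - a‖ := mul_le_mul_of_nonneg_right (hnf1 _) (norm_nonneg _)
        _ = ‖w k - a‖ := one_mul _
      rw [heq, hb0]
      linarith
    have hlim1 : Tendsto (fun k => ‖w k‖) atTop (𝓝 ‖a‖) := hwlim.norm
    have hwa : Tendsto (fun k => ‖w k - a‖) atTop (𝓝 0) := by
      have h := (hwlim.sub_const a).norm
      simpa using h
    have hlim2 : Tendsto (fun k => ‖a + b‖ + ‖w k - a‖) atTop (𝓝 (‖a + b‖)) := by
      have h2 : Tendsto (fun k => ‖a + b‖ + ‖w k - a‖) atTop (𝓝 (‖a + b‖ + 0)) :=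
        tendsto_const_nhds.add hwa
      simpa using h2
    exact le_of_tendsto_of_tendsto' hlim1 hlim2 key
  -- A + B is closed
  have hclosedsum : IsClosed ((A ⊔ B : Submodule ℝ X) : Set X) := by
    apply IsSeqClosed.isClosed
    intro zseq p hzs hzp
    have hdec : ∀ k, ∃ a, a ∈ A ∧ ∃ b, b ∈ B ∧ zseq k = a + b := by
      intro k
      obtain ⟨a, ha, b, hb, h⟩ := Submodule.mem_sup.mp (hzs k)
      exact ⟨a, ha, b, hb, h.symm⟩
    choose aa haa bb hbb hab using hdec
    have hcauchy : CauchySeq aa := by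
      have hzc : CauchySeq zseq := hzp.cauchySeq
      rw [Metric.cauchySeq_iff] at hzc ⊢
      intro ε hε
      obtain ⟨N, hN⟩ := hzc ε hε
      refine ⟨N, fun k hk l hl => ?_⟩
      have hle : ‖aa k - aa l‖ ≤ ‖(aa k - aa l) + (bb k - bb l)‖ :=
        hk2 _ (Submodule.sub_mem A (haa k) (haa l)) _ (Submodule.sub_mem B (hbb k) (hbb l))
      calc dist (aa k) (aa l) = ‖aa k - aa l‖ := dist_eq_norm _ _
      _ ≤ ‖(aa k - aa l) + (bb k - bb l)‖ := hle
      _ = ‖(aa k + bb k) - (aa l + bb l)‖ := by congr 1; abel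
      _ = dist (zseq k) (zseq l) := by rw [← hab, ← hab, dist_eq_norm]
      _ < ε := hN k hk l hl
    obtain ⟨alim, halim⟩ := cauchySeq_tendsto_of_complete hcauchy
    have haA : alim ∈ A :=
      (Submodule.isClosed_topologicalClosure _).mem_of_tendsto halim
        (Filter.Eventually.of_forall haa)
    have hbB : p - alim ∈ B := by
      have hblim : Tendsto bb atTop (𝓝 (p - alim)) := by
        have : Tendsto (fun k => zseq k - aa k) atTop (𝓝 (p - alim)) := hzp.sub halim
        apply this.congr
        intro k
        rw [hab k]
        abel
      exact (Submodule.isClosed_topologicalClosure _).mem_of_tendsto hblim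
        (Filter.Eventually.of_forall hbb)
    exact Submodule.mem_sup.mpr ⟨alim, haA, p - alim, hbB, by abel⟩
  have htop : (A ⊔ B : Submodule ℝ X) = ⊤ := by
    rw [eq_top_iff, ← hgen]
    apply Submodule.topologicalClosure_minimal
    · rw [Submodule.span_le]
      rintro y ⟨i, hi, rfl⟩
      by_cases hiM : i ∈ Mw
      · exact Submodule.mem_sup_left (subset_closedSpan _ ⟨i, hiM, rfl⟩)
      · exact Submodule.mem_sup_right (subset_closedSpan _ ⟨i, ⟨hi, hiM⟩, rfl⟩)
    · exact hclosedsum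
  obtain ⟨a, haA, b, hbB, hab⟩ :=
    Submodule.mem_sup.mp (show z ∈ (A ⊔ B : Submodule ℝ X) by rw [htop]; trivial)
  -- margin
  obtain ⟨m, hm⟩ := exists_nat_one_div_lt (show (0:ℝ) < (gv a a - tv a)/2 by
    have := hgv a; linarith)
  set ε : ℝ := 1/((m:ℝ)+1) with hε
  have hεpos : 0 < ε := by positivity
  have h2ε : tv a + 2*ε < gv a a := by
    have : ε < (gv a a - tv a)/2 := hm
    linarith
  have haT : (a:X) ∈ closure (ratSpan x Mw) := by rw [ratSpan_closure]; exact haA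
  obtain ⟨w, hw, hwd⟩ := Metric.mem_closure_iff.mp haT (ε/2) (by positivity)
  obtain ⟨n, hn⟩ := hTdec w hw
  have habs : ∀ g : X →L[ℝ] ℝ, ‖g‖ ≤ 1 → |g a - g w| ≤ dist a w := by
    intro g hg
    calc |g a - g w| = |g (a - w)| := by rw [map_sub]
    _ ≤ ‖g‖ * ‖a - w‖ := (g).le_opNorm _
    _ ≤ 1 * ‖a - w‖ := mul_le_mul_of_nonneg_right hg (norm_nonneg _)
    _ = dist a w := by rw [one_mul, dist_eq_norm]
  have hwU : w ∈ U m a := by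
    show tv a + 1/((m:ℝ)+1) < gv a w
    have h1 := (abs_le.mp (habs (gv a) (hgnorm a))).2
    have h2 : gv a a - gv a w ≤ dist a w := by linarith [abs_le.mp (habs (gv a) (hgnorm a)) |>.2]
    linarith
  have hwA : w ∈ ((closedSpan (x '' (M n).1) : Submodule ℝ X) : Set X) :=
    Submodule.le_topologicalClosure _ (ratSpan_sub_span x _ hn)
  obtain ⟨v, hvT, hvU⟩ := hTcov (M n) m w hwA ⟨a, hwU⟩
  have hvV : v ∈ V := Set.mem_iUnion.mpr ⟨n, Set.mem_iUnion.mpr ⟨m, hvT⟩⟩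
  have hga2 : tv v < gv v a := by
    have h1 : tv v + 1/((m:ℝ)+1) < gv v w := hvU
    have h2 : gv v w - gv v a ≤ dist a w := by
      have := (abs_le.mp (habs (gv v) (hgnorm v))).1
      linarith
    have h3 : dist a w < ε/2 := hwd
    rw [← hε] at h1
    linarith
  have hsupp2 : Sup (gv v) ⊆ Mw := by
    have h1 : Sup (gv v) ⊆ (M (n+1)).1 := by
      rw [hMsucc]
      intro i hi
      exact Set.mem_union_right _ (Set.mem_union_right _
        (Set.mem_iUnion.mpr ⟨m, Set.mem_biUnion hvT hi⟩))
    exact h1.trans (Set.subset_iUnion (fun n => (M n).1) (n+1))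
  have hgb : gv v b = 0 := hSupvan _ _ hsupp2 b hbB
  have hgz : tv v < gv v z := by
    rw [← hab, map_add, hgb, add_zero]
    exact hga2
  exact absurd (hglt v z (hzC v hvV)) (not_lt.mpr hgz.le)

end Helpers

theorem stmt19 {X : Type u} [NormedAddCommGroup X] [NormedSpace ℝ X] [CompleteSpace X]
    (hII : CondII X)
    (lam : Ordinal.{u})
    (x : Ordinal.{u} → X) (f : Ordinal.{u} → (X →L[ℝ] ℝ))
    (hbiorth : ∀ α < lam, ∀ β < lam, f α (x β) = if α = β then 1 else 0)
    (hgen : closedSpan (x '' Set.Iio lam) = ⊤)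
    (hsep : ∀ v : X, v ≠ 0 → ∃ α < lam, f α v ≠ 0) :
    -- every functional has countable support on the M-basis …
    (∀ g : X →L[ℝ] ℝ, {α : Ordinal.{u} | α < lam ∧ g (x α) ≠ 0}.Countable) ∧
    -- … consequently `X` is WLD, and has property (C); so for spaces admitting an
    -- M-basis, condition (II), property (C) and WLD coincide
    IsWLD X ∧ PropertyC X := by
  have h1 : ∀ g : X →L[ℝ] ℝ, {α : Ordinal.{u} | α < lam ∧ g (x α) ≠ 0}.Countable :=
    fun g => countable_support hII lam x f hbiorth hsep g
  exact ⟨h1, wld_package lam x f hbiorth hgen hsep h1,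
    propertyC_of_countable_support lam x hgen h1⟩
end
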